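/- arXiv:1211.1123 — 7 statements merged into one kernel-verified Lean document; each statement's English description precedes it below -/
import Mathlib

section
/- Lemma 2.2: Suppose assumption (H2) holds. Then for every x ∈ S the symmetric matrix Q(x) := B(x)H(x)B(x)ᵀ − diag(g(x)) is positive definite. -/
open Matrix Set Filter

noncomputable section

/-- The gradient of `f : ℝⁿ → ℝ` at `x`, as the vector of partial derivatives. -/
def grad {n : ℕ} (f : (Fin n → ℝ) → ℝ) (x : Fin n → ℝ) : Fin n → ℝ :=
  fun j => fderiv ℝ f x (Pi.single j 1)

/-- The feasible set `S`. -/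
def feas {n m k : ℕ} (h : Fin m → (Fin n → ℝ) → ℝ) (g : Fin k → (Fin n → ℝ) → ℝ) :
    Set (Fin n → ℝ) :=
  {x | (∀ i, h i x = 0) ∧ (∀ j, g j x ≤ 0)}

/-- Jacobian of the equality constraints (rows `∇h_i(x)`). -/
def matA {n m : ℕ} (h : Fin m → (Fin n → ℝ) → ℝ) (x : Fin n → ℝ) :
    Matrix (Fin m) (Fin n) ℝ :=
  Matrix.of fun i => grad (h i) x

/-- Jacobian of the inequality constraints (rows `∇g_j(x)`). -/
def matB {n k : ℕ} (g : Fin k → (Fin n → ℝ) → ℝ) (x : Fin n → ℝ) :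
    Matrix (Fin k) (Fin n) ℝ :=
  Matrix.of fun j => grad (g j) x

/-- `H(x) = I − Aᵀ(AAᵀ)⁻¹A`. -/
def matH {n m : ℕ} (h : Fin m → (Fin n → ℝ) → ℝ) (x : Fin n → ℝ) :
    Matrix (Fin n) (Fin n) ℝ :=
  1 - (matA h x)ᵀ * (matA h x * (matA h x)ᵀ)⁻¹ * matA h x

/-- `Q(x) = B(x)H(x)B(x)ᵀ − diag(g(x))`. -/
def matQ {n m k : ℕ} (h : Fin m → (Fin n → ℝ) → ℝ) (g : Fin k → (Fin n → ℝ) → ℝ)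
    (x : Fin n → ℝ) : Matrix (Fin k) (Fin k) ℝ :=
  matB g x * matH h x * (matB g x)ᵀ - Matrix.diagonal (fun j => g j x)

/-- Assumption (H1). -/
def hypH1 {n m k : ℕ} (θ : (Fin n → ℝ) → ℝ) (h : Fin m → (Fin n → ℝ) → ℝ)
    (g : Fin k → (Fin n → ℝ) → ℝ) : Prop :=
  (feas h g).Nonempty ∧ ∀ x₀ ∈ feas h g, IsCompact {x ∈ feas h g | θ x ≤ θ x₀}

/-- Assumption (H2). -/
def hypH2 {n m k : ℕ} (h : Fin m → (Fin n → ℝ) → ℝ) (g : Fin k → (Fin n → ℝ) → ℝ) : Prop :=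
  ∀ x ∈ feas h g,
    LinearIndependent ℝ
      (Sum.elim (fun i : Fin m => grad (h i) x)
        (fun j : {j : Fin k // g j x = 0} => grad (g (j : Fin k)) x))

/-- `P(x) = Q(x)⁻¹ B(x) H(x)`. -/
def matP {n m k : ℕ} (h : Fin m → (Fin n → ℝ) → ℝ) (g : Fin k → (Fin n → ℝ) → ℝ)
    (x : Fin n → ℝ) : Matrix (Fin k) (Fin n) ℝ :=
  (matQ h g x)⁻¹ * matB g x * matH h x

/-- `v(x) = P(x)(∇θ(x))ᵀ`. -/
def vecv {n m k : ℕ} (θ : (Fin n → ℝ) → ℝ) (h : Fin m → (Fin n → ℝ) → ℝ)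
    (g : Fin k → (Fin n → ℝ) → ℝ) (x : Fin n → ℝ) : Fin k → ℝ :=
  (matP h g x).mulVec (grad θ x)

/-- componentwise positive part. -/
def pPart {k : ℕ} (w : Fin k → ℝ) : Fin k → ℝ := fun j => max 0 (w j)

/-- `R₃(x)`. -/
def matR3 {n k : ℕ} (b c : Fin k → (Fin n → ℝ) → ℝ) (p : Fin k → ℕ) (x : Fin n → ℝ)
    (v : Fin k → ℝ) : Matrix (Fin k) (Fin k) ℝ :=
  Matrix.diagonal (fun j => b j x + c j x * (max 0 (v j)) ^ (2 * p j))

/-- The vector field `F(x)` of (2.4), (2.5). -/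
def vecF {n m k : ℕ} (θ : (Fin n → ℝ) → ℝ) (h : Fin m → (Fin n → ℝ) → ℝ)
    (g : Fin k → (Fin n → ℝ) → ℝ)
    (R1 : (Fin n → ℝ) → Matrix (Fin n) (Fin n) ℝ)
    (R2 : (Fin n → ℝ) → Matrix (Fin k) (Fin k) ℝ)
    (a b c : Fin k → (Fin n → ℝ) → ℝ) (p : Fin k → ℕ) (x : Fin n → ℝ) : Fin n → ℝ :=
  -(((matH h x - (matP h g x)ᵀ * matQ h g x * matP h g x) * R1 x *
      (matH h x - (matP h g x)ᵀ * matQ h g x * matP h g x)).mulVec (grad θ x))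
  - ((matP h g x)ᵀ * Matrix.diagonal (fun j => g j x) *
      (R2 x * Matrix.diagonal (fun j => g j x) - Matrix.diagonal (fun j => a j x))).mulVec
        (vecv θ h g x)
  - ((matP h g x)ᵀ * matR3 b c p x (vecv θ h g x)).mulVec (pPart (vecv θ h g x))

/-- The set `Φ` of KKT points. -/
def KKTset {n m k : ℕ} (θ : (Fin n → ℝ) → ℝ) (h : Fin m → (Fin n → ℝ) → ℝ)
    (g : Fin k → (Fin n → ℝ) → ℝ) : Set (Fin n → ℝ) :=
  {x | x ∈ feas h g ∧ ∃ (lam : Fin m → ℝ) (mu : Fin k → ℝ),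
    (∀ j, 0 ≤ mu j) ∧
    grad θ x + (∑ i, lam i • grad (h i) x) + (∑ j, mu j • grad (g j) x) = 0 ∧
    (∑ j, mu j * g j x) = 0}


/-- Lemma 2.2: under assumption (H2) the matrix `Q(x) = B(x)H(x)B(x)ᵀ − diag(g(x))`
is positive definite for every `x ∈ S`. -/
theorem stmt_4
    {n m k : ℕ} (hmn : m < n)
    (θ : (Fin n → ℝ) → ℝ) (h : Fin m → (Fin n → ℝ) → ℝ) (g : Fin k → (Fin n → ℝ) → ℝ)
    (hθ : ContDiff ℝ 2 θ) (hhC : ∀ i, ContDiff ℝ 2 (h i)) (hgC : ∀ j, ContDiff ℝ 2 (g j))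
    (hH2 : hypH2 h g) :
    ∀ x ∈ feas h g, (matQ h g x).PosDef := by
  intro x hx
  obtain ⟨hh0, hg0⟩ := hx
  set A := matA h x with hAdef
  set B := matB g x with hBdef
  set H := matH h x with hHdef
  have hli := hH2 x ⟨hh0, hg0⟩
  have hliA : LinearIndependent ℝ (fun i : Fin m => grad (h i) x) :=
    hli.comp Sum.inl Sum.inl_injective
  have hstar : ∀ {N : ℕ} (v : Fin N → ℝ), star v = v := fun v => funext fun _ => star_trivial _
  -- A * Aᵀ is positive definite
  have hAAT : (A * Aᵀ).PosDef := by
    rw [posDef_iff_dotProduct_mulVec]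
    constructor
    · have := isHermitian_mul_conjTranspose_self A
      rwa [conjTranspose_eq_transpose_of_trivial] at this
    · intro v hv
      have key : star v ⬝ᵥ (A * Aᵀ) *ᵥ v = (Aᵀ *ᵥ v) ⬝ᵥ (Aᵀ *ᵥ v) := by
        rw [hstar v, ← mulVec_mulVec, dotProduct_mulVec, ← mulVec_transpose]
      rw [key]
      have hne : Aᵀ *ᵥ v ≠ 0 := by
        intro h0
        apply hv
        have := (Fintype.linearIndependent_iff.mp hliA) v ?_
        · funext i; exact this i
        · funext j
          have := congrFun h0 j
          simpa [mulVec, dotProduct, Matrix.transpose_apply, hAdef, matA,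
            Matrix.of_apply, Finset.sum_apply, mul_comm] using this
      have := dotProduct_self_star_pos_iff (v := Aᵀ *ᵥ v) |>.mpr hne
      rwa [hstar] at this
  have hdet : IsUnit (A * Aᵀ).det := hAAT.det_pos.ne'.isUnit
  have hsymmInv : ((A * Aᵀ)⁻¹)ᵀ = (A * Aᵀ)⁻¹ := by
    rw [transpose_nonsing_inv, transpose_mul, transpose_transpose]
  -- H is symmetric
  have hHsymm : Hᵀ = H := by
    rw [hHdef, matH, transpose_sub, transpose_one, transpose_mul, transpose_mul,
      transpose_transpose, ← hAdef, hsymmInv, Matrix.mul_assoc]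
  -- H * Aᵀ = 0
  have hHA : H * Aᵀ = 0 := by
    rw [hHdef, matH, ← hAdef, Matrix.sub_mul, Matrix.one_mul,
      Matrix.mul_assoc (Aᵀ * (A * Aᵀ)⁻¹) A Aᵀ, Matrix.mul_assoc (Aᵀ) ((A * Aᵀ)⁻¹) (A * Aᵀ),
      nonsing_inv_mul _ hdet, Matrix.mul_one, sub_self]
  -- H is idempotent
  have hHH : H * H = H := by
    nth_rewrite 2 [hHdef]
    rw [matH, ← hAdef, Matrix.mul_sub, Matrix.mul_one,
      Matrix.mul_assoc (Aᵀ) ((A * Aᵀ)⁻¹) A, ← Matrix.mul_assoc H (Aᵀ) ((A * Aᵀ)⁻¹ * A),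
      hHA, Matrix.zero_mul, sub_zero]
  have hQx : matQ h g x = B * H * Bᵀ - Matrix.diagonal fun j => g j x := rfl
  rw [posDef_iff_dotProduct_mulVec]
  constructor
  · show (matQ h g x)ᴴ = matQ h g x
    rw [conjTranspose_eq_transpose_of_trivial, hQx, transpose_sub, transpose_mul, transpose_mul,
      transpose_transpose, Matrix.diagonal_transpose, hHsymm, Matrix.mul_assoc]
  · intro y hy
    rw [hstar y]
    set w := (H * Bᵀ) *ᵥ y with hwdef
    have hsplit : y ⬝ᵥ matQ h g x *ᵥ y = w ⬝ᵥ w + ∑ j, (- g j x) * (y j * y j) := by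
      rw [hQx, Matrix.sub_mulVec, dotProduct_sub]
      have h1 : y ⬝ᵥ (B * H * Bᵀ) *ᵥ y = w ⬝ᵥ w := by
        have hfac : B * H * Bᵀ = (H * Bᵀ)ᵀ * (H * Bᵀ) := by
          rw [transpose_mul, transpose_transpose, hHsymm, Matrix.mul_assoc B H (H * Bᵀ),
            ← Matrix.mul_assoc H H (Bᵀ), hHH, ← Matrix.mul_assoc]
        rw [hfac, ← mulVec_mulVec, dotProduct_mulVec, vecMul_transpose, hwdef]
      have h2 : y ⬝ᵥ (Matrix.diagonal fun j => g j x) *ᵥ y = ∑ j, g j x * (y j * y j) := by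
        simp only [dotProduct, mulVec_diagonal]
        exact Finset.sum_congr rfl fun j _ => by ring
      rw [h1, h2, sub_eq_add_neg, ← Finset.sum_neg_distrib]
      congr 1
      exact Finset.sum_congr rfl fun j _ => by ring
    rw [hsplit]
    have hterm : ∀ j, 0 ≤ (- g j x) * (y j * y j) :=
      fun j => mul_nonneg (by linarith [hg0 j]) (mul_self_nonneg _)
    have hw2 : 0 ≤ w ⬝ᵥ w := by
      have := dotProduct_self_star_nonneg (R := ℝ) w
      rwa [hstar] at this
    rcases eq_or_lt_of_le (add_nonneg hw2 (Finset.sum_nonneg fun j _ => hterm j)) with heq | hlt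
    swap
    · exact hlt
    exfalso
    have hw0 : w ⬝ᵥ w = 0 := by
      by_contra hc
      have h1 : 0 < w ⬝ᵥ w := lt_of_le_of_ne hw2 (Ne.symm hc)
      have h2 : 0 < w ⬝ᵥ w + ∑ j, (- g j x) * (y j * y j) :=
        add_pos_of_pos_of_nonneg h1 (Finset.sum_nonneg fun j _ => hterm j)
      linarith [heq]
    have hsum0 : ∑ j, (- g j x) * (y j * y j) = 0 := by linarith [heq, hw0]
    have hweq0 : w = 0 := dotProduct_self_eq_zero.mp hw0
    have hterm0 : ∀ j, (- g j x) * (y j * y j) = 0 := fun j =>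
      (Finset.sum_eq_zero_iff_of_nonneg (fun j _ => hterm j)).mp hsum0 j (Finset.mem_univ j)
    have hinactive : ∀ j, g j x ≠ 0 → y j = 0 := by
      intro j hgj
      rcases mul_eq_zero.mp (hterm0 j) with h1 | h2
      · exact absurd (by linarith [neg_eq_zero.mp h1]) hgj
      · exact mul_self_eq_zero.mp h2
    set z := Bᵀ *ᵥ y with hzdef
    have hHz : H *ᵥ z = 0 := by rw [hzdef, mulVec_mulVec]; exact hweq0
    set c := ((A * Aᵀ)⁻¹ * A) *ᵥ z with hcdef
    have hzA : z = Aᵀ *ᵥ c := by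
      have hHz' : (1 - Aᵀ * (A * Aᵀ)⁻¹ * A) *ᵥ z = 0 := hHz
      rw [Matrix.sub_mulVec, Matrix.one_mulVec, sub_eq_zero] at hHz'
      calc z = (Aᵀ * (A * Aᵀ)⁻¹ * A) *ᵥ z := hHz'
        _ = Aᵀ *ᵥ (((A * Aᵀ)⁻¹ * A) *ᵥ z) := by rw [Matrix.mul_assoc, ← mulVec_mulVec]
        _ = Aᵀ *ᵥ c := rfl
    have hcoeff := Fintype.linearIndependent_iff.mp hli
      (Sum.elim c (fun j : {j : Fin k // g j x = 0} => - y (j : Fin k)))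
    have hy0 : y = 0 := by
      have hzero : ∑ s : Fin m ⊕ {j : Fin k // g j x = 0},
          (Sum.elim c (fun j : {j : Fin k // g j x = 0} => - y (j : Fin k))) s •
            (Sum.elim (fun i : Fin m => grad (h i) x)
              (fun j : {j : Fin k // g j x = 0} => grad (g (j : Fin k)) x)) s = 0 := by
        rw [Fintype.sum_sum_type]
        funext t
        simp only [Sum.elim_inl, Sum.elim_inr, Pi.add_apply, Finset.sum_apply,
          Pi.smul_apply, smul_eq_mul, Pi.zero_apply]
        have e1 : ∑ i : Fin m, c i * grad (h i) x t = (Aᵀ *ᵥ c) t := by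
          simp only [mulVec, dotProduct, Matrix.transpose_apply, hAdef, matA, Matrix.of_apply]
          exact Finset.sum_congr rfl fun i _ => mul_comm _ _
        have e2 : ∑ j : {j : Fin k // g j x = 0}, (- y (j : Fin k)) * grad (g (j : Fin k)) x t
            = - z t := by
          have hz : z t = ∑ j : Fin k, y j * grad (g j) x t := by
            simp only [hzdef, mulVec, dotProduct, Matrix.transpose_apply, hBdef, matB,
              Matrix.of_apply]
            exact Finset.sum_congr rfl fun j _ => mul_comm _ _
          have hfull : ∑ j : Fin k, y j * grad (g j) x t
              = ∑ j ∈ Finset.univ.filter (fun j => g j x = 0), y j * grad (g j) x t := by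
            refine (Finset.sum_subset (Finset.filter_subset _ _) ?_).symm
            intro j _ hj
            have : g j x ≠ 0 := by simpa using hj
            rw [hinactive j this, zero_mul]
          have hsub : ∑ j ∈ Finset.univ.filter (fun j => g j x = 0), y j * grad (g j) x t
              = ∑ j : {j : Fin k // g j x = 0}, y (j : Fin k) * grad (g (j : Fin k)) x t := by
            exact Finset.sum_subtype _ (by simp) _
          rw [hz, hfull, hsub, ← Finset.sum_neg_distrib]
          exact Finset.sum_congr rfl fun j _ => by ring
        rw [e1, e2, ← hzA]
        ring
      have hall := hcoeff hzero
      funext j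
      by_cases hgj : g j x = 0
      · have := hall (Sum.inr ⟨j, hgj⟩)
        simpa using this
      · exact hinactive j hgj
    exact hy hy0


end
end

section
/- Theorem 2.3(a): Under assumptions (H1) and (H2), the vector field F satisfies A(x)F(x) = 0 for every x ∈ S. -/
open Matrix Set Filter

noncomputable section

/-- Theorem 2.3(a): `A(x)F(x) = 0` for every `x ∈ S`. -/
theorem stmt_5
    {n m k : ℕ} (hmn : m < n)
    (θ : (Fin n → ℝ) → ℝ) (h : Fin m → (Fin n → ℝ) → ℝ) (g : Fin k → (Fin n → ℝ) → ℝ)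
    (hθ : ContDiff ℝ 2 θ) (hhC : ∀ i, ContDiff ℝ 2 (h i)) (hgC : ∀ j, ContDiff ℝ 2 (g j))
    (hH1 : hypH1 θ h g) (hH2 : hypH2 h g)
    (R1 : (Fin n → ℝ) → Matrix (Fin n) (Fin n) ℝ)
    (R2 : (Fin n → ℝ) → Matrix (Fin k) (Fin k) ℝ)
    (a b c : Fin k → (Fin n → ℝ) → ℝ) (p : Fin k → ℕ)
    (hR1C : ∀ i j, ContDiff ℝ 1 fun x => R1 x i j)
    (hR1pd : ∀ x, (R1 x).PosDef)
    (hR2C : ∀ i j, ContDiff ℝ 1 fun x => R2 x i j)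
    (hR2psd : ∀ x, (R2 x).PosSemidef)
    (haC : ∀ j, ContDiff ℝ 1 (a j)) (hbC : ∀ j, ContDiff ℝ 1 (b j))
    (hcC : ∀ j, ContDiff ℝ 1 (c j))
    (ha0 : ∀ j x, 0 ≤ a j x) (hb0 : ∀ j x, 0 ≤ b j x) (hc0 : ∀ j x, 0 ≤ c j x)
    (hbc : ∀ x ∈ feas h g, ∀ j, 0 < b j x + c j x)
    (hpd : ∀ x ∈ feas h g, (R2 x).PosDef ∨ (Matrix.diagonal fun j => a j x).PosDef)
    (hp : ∀ j, 1 ≤ p j) :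
    ∀ x ∈ feas h g, (matA h x).mulVec (vecF θ h g R1 R2 a b c p x) = 0 := by

  intro x hx
  -- rows of A are linearly independent
  have hli : LinearIndependent ℝ (fun i : Fin m => matA h x i) := by
    have := (hH2 x hx).comp Sum.inl Sum.inl_injective
    exact this
  -- A * Aᵀ is a unit
  have hunit : IsUnit (matA h x * (matA h x)ᵀ) := by
    rw [← Matrix.mulVec_injective_iff_isUnit]
    have hker : ∀ v, (matA h x * (matA h x)ᵀ).mulVec v = 0 → v = 0 := by
      intro v hv
      have h1 : v ⬝ᵥ (matA h x * (matA h x)ᵀ).mulVec v = 0 := by rw [hv]; simp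
      have h2 : (Matrix.vecMul v (matA h x)) ⬝ᵥ (Matrix.vecMul v (matA h x)) = 0 := by
        rw [← Matrix.mulVec_mulVec, Matrix.dotProduct_mulVec, Matrix.mulVec_transpose] at h1
        exact h1
      have h3 : Matrix.vecMul v (matA h x) = 0 :=
        dotProduct_self_eq_zero.mp h2
      have hinj : Function.Injective (matA h x).vecMul :=
        Matrix.vecMul_injective_iff.mpr hli
      have : Matrix.vecMul v (matA h x) = Matrix.vecMul 0 (matA h x) := by
        simpa using h3
      exact hinj this
    intro v w hvw
    have : (matA h x * (matA h x)ᵀ).mulVec (v - w) = 0 := by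
      rw [Matrix.mulVec_sub, hvw, sub_self]
    exact sub_eq_zero.mp (hker _ this)
  -- A * H = 0
  have hAH : matA h x * matH h x = 0 := by
    have hinv : (matA h x * (matA h x)ᵀ) * (matA h x * (matA h x)ᵀ)⁻¹ = 1 :=
      Matrix.mul_nonsing_inv _ ((Matrix.isUnit_iff_isUnit_det _).mp hunit)
    unfold matH
    rw [Matrix.mul_sub, Matrix.mul_one]
    rw [show matA h x * ((matA h x)ᵀ * (matA h x * (matA h x)ᵀ)⁻¹ * matA h x)
        = (matA h x * (matA h x)ᵀ) * (matA h x * (matA h x)ᵀ)⁻¹ * matA h x by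
      simp only [Matrix.mul_assoc]]
    rw [hinv, Matrix.one_mul, sub_self]
  -- H is symmetric
  have hHsymm : (matH h x)ᵀ = matH h x := by
    unfold matH
    rw [Matrix.transpose_sub, Matrix.transpose_one]
    congr 1
    rw [Matrix.transpose_mul, Matrix.transpose_mul, Matrix.transpose_transpose,
      Matrix.transpose_nonsing_inv, Matrix.transpose_mul, Matrix.transpose_transpose]
    simp only [Matrix.mul_assoc]
  -- A * Pᵀ = 0
  have hAPt : matA h x * (matP h g x)ᵀ = 0 := by
    unfold matP
    rw [Matrix.transpose_mul, Matrix.transpose_mul, hHsymm, ← Matrix.mul_assoc,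
      ← Matrix.mul_assoc, hAH, Matrix.zero_mul, Matrix.zero_mul]
  have hAHP : matA h x * (matH h x - (matP h g x)ᵀ * matQ h g x * matP h g x) = 0 := by
    rw [Matrix.mul_sub, hAH]
    rw [show matA h x * ((matP h g x)ᵀ * matQ h g x * matP h g x)
        = (matA h x * (matP h g x)ᵀ) * matQ h g x * matP h g x by simp only [Matrix.mul_assoc]]
    rw [hAPt, Matrix.zero_mul, Matrix.zero_mul, sub_self]
  unfold vecF
  rw [Matrix.mulVec_sub, Matrix.mulVec_sub, Matrix.mulVec_neg]
  rw [Matrix.mulVec_mulVec, Matrix.mulVec_mulVec, Matrix.mulVec_mulVec]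
  rw [show matA h x * ((matH h x - (matP h g x)ᵀ * matQ h g x * matP h g x) * R1 x *
      (matH h x - (matP h g x)ᵀ * matQ h g x * matP h g x))
      = (matA h x * (matH h x - (matP h g x)ᵀ * matQ h g x * matP h g x)) * R1 x *
      (matH h x - (matP h g x)ᵀ * matQ h g x * matP h g x) by simp only [Matrix.mul_assoc], hAHP]
  rw [show matA h x * ((matP h g x)ᵀ * Matrix.diagonal (fun j => g j x) *
      (R2 x * Matrix.diagonal (fun j => g j x) - Matrix.diagonal (fun j => a j x)))
      = (matA h x * (matP h g x)ᵀ) * Matrix.diagonal (fun j => g j x) *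
      (R2 x * Matrix.diagonal (fun j => g j x) - Matrix.diagonal (fun j => a j x)) by
    simp only [Matrix.mul_assoc], hAPt]
  rw [show matA h x * ((matP h g x)ᵀ * matR3 b c p x (vecv θ h g x))
      = (matA h x * (matP h g x)ᵀ) * matR3 b c p x (vecv θ h g x) by simp only [Matrix.mul_assoc], hAPt]
  simp


end
end

section
/- Theorem 2.3(d): Under assumptions (H1) and (H2), for every x ∈ S it holds that B(x)F(x) = diag(g(x))Q(x)⁻¹w(x) − R₃(x)(v(x))⁺, where w(x) := B(x)H(x)R₁(x)[H(x) − P(x)ᵀQ(x)P(x)](∇θ(x))ᵀ − [Q(x) + diag(g(x))](R₂(x)diag(g(x)) − diag(a(x)))v(x) − R₃(x)(v(x))⁺. -/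
open Matrix Set Filter

noncomputable section

section AuxLemmas
open Matrix

lemma aux_dot_self_nonneg {k : ℕ} (u : Fin k → ℝ) : 0 ≤ u ⬝ᵥ u :=
  Finset.sum_nonneg fun i _ => mul_self_nonneg _

lemma aux_tmulVec {m n : ℕ} (A : Matrix (Fin m) (Fin n) ℝ) (y : Fin m → ℝ) :
    Aᵀ *ᵥ y = ∑ i, y i • A i := by
  funext l
  simp [Matrix.mulVec, dotProduct, Finset.sum_apply, mul_comm]

lemma aux_gram_posdef {m n : ℕ} (A : Matrix (Fin m) (Fin n) ℝ)
    (hA : LinearIndependent ℝ (fun i => A i)) : (A * Aᵀ).PosDef := by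
  refine Matrix.PosDef.of_dotProduct_mulVec_pos ?_ ?_
  · simpa [Matrix.conjTranspose_eq_transpose_of_trivial] using
      Matrix.isHermitian_mul_conjTranspose_self A
  · intro z hz
    have hinj := Matrix.vecMul_injective_iff.mpr hA
    have hu : z ᵥ* A ≠ 0 := fun h0 => hz (hinj (show A.vecMul z = A.vecMul 0 by simpa using h0))
    have key : star z ⬝ᵥ (A * Aᵀ) *ᵥ z = (z ᵥ* A) ⬝ᵥ (z ᵥ* A) := by
      rw [star_trivial, ← Matrix.mulVec_mulVec, Matrix.dotProduct_mulVec, Matrix.mulVec_transpose]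
    rw [key]
    exact lt_of_le_of_ne (aux_dot_self_nonneg _)
      fun h0 => hu (dotProduct_self_eq_zero.mp h0.symm)

lemma aux_algebra {n k : ℕ} (B : Matrix (Fin k) (Fin n) ℝ) (Hm R1x : Matrix (Fin n) (Fin n) ℝ)
    (Q D Da R2x R3m : Matrix (Fin k) (Fin k) ℝ)
    (G : Fin n → ℝ) (v vp : Fin k → ℝ)
    (hQdef : Q = B * Hm * Bᵀ - D)
    (hQQ : Q * Q⁻¹ = 1) (hQiQ : Q⁻¹ * Q = 1) (hQisym : (Q⁻¹)ᵀ = Q⁻¹)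
    (hHsym : Hmᵀ = Hm)
    (P : Matrix (Fin k) (Fin n) ℝ) (hPdef : P = Q⁻¹ * B * Hm) :
    B *ᵥ (-(((Hm - Pᵀ * Q * P) * R1x * (Hm - Pᵀ * Q * P)) *ᵥ G)
      - (Pᵀ * D * (R2x * D - Da)) *ᵥ v
      - (Pᵀ * R3m) *ᵥ vp) =
    (D * Q⁻¹) *ᵥ ((B * Hm * R1x * (Hm - Pᵀ * Q * P)) *ᵥ G
      - ((Q + D) * (R2x * D - Da)) *ᵥ v - R3m *ᵥ vp) - R3m *ᵥ vp := by
  have hQiQ' : ∀ (X : Matrix (Fin k) (Fin n) ℝ), Q⁻¹ * (Q * X) = X := fun X => by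
    rw [← Matrix.mul_assoc, hQiQ, Matrix.one_mul]
  have hQiQ2 : ∀ (X : Matrix (Fin k) (Fin k) ℝ), Q⁻¹ * (Q * X) = X := fun X => by
    rw [← Matrix.mul_assoc, hQiQ, Matrix.one_mul]
  have h1 : B * Hm = Q * P := by
    rw [hPdef, ← Matrix.mul_assoc, ← Matrix.mul_assoc, hQQ, Matrix.one_mul]
  have hPT : Pᵀ = Hm * Bᵀ * Q⁻¹ := by
    rw [hPdef]
    simp only [Matrix.transpose_mul, hQisym, hHsym, Matrix.mul_assoc]
  have hBHB : B * Hm * Bᵀ = Q + D := by rw [hQdef, sub_add_cancel]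
  have h2 : B * Pᵀ = 1 + D * Q⁻¹ := by
    rw [hPT, ← Matrix.mul_assoc, ← Matrix.mul_assoc, hBHB, Matrix.add_mul, hQQ]
  have h3 : B * (Pᵀ * Q * P) = Q * P + D * P := by
    calc B * (Pᵀ * Q * P) = (B * Pᵀ) * (Q * P) := by simp only [Matrix.mul_assoc]
    _ = (1 + D * Q⁻¹) * (Q * P) := by rw [h2]
    _ = Q * P + D * P := by
        rw [Matrix.add_mul, Matrix.one_mul, Matrix.mul_assoc, hQiQ']
  have hBHmP : B * (Hm - Pᵀ * Q * P) = -(D * P) := by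
    rw [Matrix.mul_sub, h1, h3]
    abel
  have hDP : D * P = D * Q⁻¹ * (B * Hm) := by
    rw [hPdef]; simp only [Matrix.mul_assoc]
  have E1 : B * ((Hm - Pᵀ * Q * P) * R1x * (Hm - Pᵀ * Q * P)) =
      -(D * Q⁻¹ * (B * Hm * R1x * (Hm - Pᵀ * Q * P))) := by
    have e : B * ((Hm - Pᵀ * Q * P) * R1x * (Hm - Pᵀ * Q * P)) =
        (B * (Hm - Pᵀ * Q * P)) * (R1x * (Hm - Pᵀ * Q * P)) := by
      simp only [Matrix.mul_assoc]
    rw [e, hBHmP, hDP, Matrix.neg_mul]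
    simp only [Matrix.mul_assoc]
  have E2 : B * (Pᵀ * D * (R2x * D - Da)) = D * Q⁻¹ * ((Q + D) * (R2x * D - Da)) := by
    have e : B * (Pᵀ * D * (R2x * D - Da)) = (B * Pᵀ) * (D * (R2x * D - Da)) := by
      simp only [Matrix.mul_assoc]
    rw [e, h2, Matrix.add_mul, Matrix.one_mul, Matrix.add_mul, Matrix.mul_add]
    have e2 : D * Q⁻¹ * (Q * (R2x * D - Da)) = D * (R2x * D - Da) := by
      rw [Matrix.mul_assoc, hQiQ2]
    rw [e2]
  have E3 : B * (Pᵀ * R3m) = R3m + D * Q⁻¹ * R3m := by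
    rw [← Matrix.mul_assoc, h2, Matrix.add_mul, Matrix.one_mul]
  simp only [Matrix.mulVec_sub, Matrix.mulVec_neg, Matrix.mulVec_mulVec]
  rw [E1, E2, E3, Matrix.neg_mulVec, Matrix.add_mulVec]
  simp only [Matrix.mul_assoc]
  abel

end AuxLemmas

/-- Theorem 2.3(d): `B(x)F(x) = diag(g(x))·Q(x)⁻¹·w(x) − R₃(x)(v(x))⁺` for every `x ∈ S`,
where `w(x)` is as stated in the paper. -/
theorem stmt_6
    {n m k : ℕ} (hmn : m < n)
    (θ : (Fin n → ℝ) → ℝ) (h : Fin m → (Fin n → ℝ) → ℝ) (g : Fin k → (Fin n → ℝ) → ℝ)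
    (hθ : ContDiff ℝ 2 θ) (hhC : ∀ i, ContDiff ℝ 2 (h i)) (hgC : ∀ j, ContDiff ℝ 2 (g j))
    (hH1 : hypH1 θ h g) (hH2 : hypH2 h g)
    (R1 : (Fin n → ℝ) → Matrix (Fin n) (Fin n) ℝ)
    (R2 : (Fin n → ℝ) → Matrix (Fin k) (Fin k) ℝ)
    (a b c : Fin k → (Fin n → ℝ) → ℝ) (p : Fin k → ℕ)
    (hR1C : ∀ i j, ContDiff ℝ 1 fun x => R1 x i j)
    (hR1pd : ∀ x, (R1 x).PosDef)
    (hR2C : ∀ i j, ContDiff ℝ 1 fun x => R2 x i j)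
    (hR2psd : ∀ x, (R2 x).PosSemidef)
    (haC : ∀ j, ContDiff ℝ 1 (a j)) (hbC : ∀ j, ContDiff ℝ 1 (b j))
    (hcC : ∀ j, ContDiff ℝ 1 (c j))
    (ha0 : ∀ j x, 0 ≤ a j x) (hb0 : ∀ j x, 0 ≤ b j x) (hc0 : ∀ j x, 0 ≤ c j x)
    (hbc : ∀ x ∈ feas h g, ∀ j, 0 < b j x + c j x)
    (hpd : ∀ x ∈ feas h g, (R2 x).PosDef ∨ (Matrix.diagonal fun j => a j x).PosDef)
    (hp : ∀ j, 1 ≤ p j) :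
    ∀ x ∈ feas h g,
      (matB g x).mulVec (vecF θ h g R1 R2 a b c p x) =
        (Matrix.diagonal (fun j => g j x) * (matQ h g x)⁻¹).mulVec
          ((matB g x * matH h x * R1 x *
              (matH h x - (matP h g x)ᵀ * matQ h g x * matP h g x)).mulVec (grad θ x)
            - ((matQ h g x + Matrix.diagonal fun j => g j x) *
                (R2 x * Matrix.diagonal (fun j => g j x) -
                  Matrix.diagonal fun j => a j x)).mulVec (vecv θ h g x)
            - (matR3 b c p x (vecv θ h g x)).mulVec (pPart (vecv θ h g x)))
        - (matR3 b c p x (vecv θ h g x)).mulVec (pPart (vecv θ h g x)) := by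
  intro x hx
  classical
  have hxg : ∀ j, g j x ≤ 0 := hx.2
  have hli : LinearIndependent ℝ (fun i => matA h x i) :=
    (hH2 x hx).comp Sum.inl Sum.inl_injective
  have hMpd := aux_gram_posdef (matA h x) hli
  have hMdet : IsUnit (matA h x * (matA h x)ᵀ).det :=
    (Matrix.isUnit_iff_isUnit_det _).mp hMpd.isUnit
  have hMinv : (matA h x * (matA h x)ᵀ) * (matA h x * (matA h x)ᵀ)⁻¹ = 1 :=
    Matrix.mul_nonsing_inv _ hMdet
  have hHsym : (matH h x)ᵀ = matH h x := by
    simp [matH, Matrix.transpose_sub, Matrix.transpose_mul, Matrix.transpose_nonsing_inv,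
      Matrix.transpose_transpose, Matrix.mul_assoc]
  have hHH : matH h x * matH h x = matH h x := by
    have key : matA h x * ((matA h x)ᵀ * ((matA h x * (matA h x)ᵀ)⁻¹ * matA h x)) = matA h x := by
      rw [← Matrix.mul_assoc, ← Matrix.mul_assoc, hMinv, Matrix.one_mul]
    have hXX : ((matA h x)ᵀ * (matA h x * (matA h x)ᵀ)⁻¹ * matA h x) *
        ((matA h x)ᵀ * (matA h x * (matA h x)ᵀ)⁻¹ * matA h x) =
        (matA h x)ᵀ * (matA h x * (matA h x)ᵀ)⁻¹ * matA h x := by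
      simp only [Matrix.mul_assoc]
      rw [key]
    simp only [matH]
    simp only [Matrix.sub_mul, Matrix.mul_sub, Matrix.one_mul, Matrix.mul_one]
    rw [hXX]
    abel
  have hQsym : (matQ h g x)ᵀ = matQ h g x := by
    simp [matQ, Matrix.transpose_sub, Matrix.transpose_mul, hHsym, Matrix.diagonal_transpose,
      Matrix.mul_assoc]
  have hQpd : (matQ h g x).PosDef := by
    refine Matrix.PosDef.of_dotProduct_mulVec_pos ?_ ?_
    · rw [Matrix.IsHermitian, Matrix.conjTranspose_eq_transpose_of_trivial]; exact hQsym
    · intro z hz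
      obtain ⟨u, hu⟩ : ∃ u', u' = (matB g x)ᵀ *ᵥ z := ⟨_, rfl⟩
      have hfact : matB g x * matH h x * (matB g x)ᵀ =
          (matH h x * (matB g x)ᵀ)ᵀ * (matH h x * (matB g x)ᵀ) := by
        rw [Matrix.transpose_mul, Matrix.transpose_transpose, hHsym]
        calc matB g x * matH h x * (matB g x)ᵀ
            = matB g x * (matH h x * matH h x) * (matB g x)ᵀ := by rw [hHH]
          _ = matB g x * matH h x * (matH h x * (matB g x)ᵀ) := by simp only [Matrix.mul_assoc]
      have hS1 : star z ⬝ᵥ ((matB g x * matH h x * (matB g x)ᵀ) *ᵥ z) =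
          (matH h x *ᵥ u) ⬝ᵥ (matH h x *ᵥ u) := by
        rw [star_trivial, hfact, ← Matrix.mulVec_mulVec, Matrix.dotProduct_mulVec,
          Matrix.vecMul_transpose, ← Matrix.mulVec_mulVec, ← hu]
      have hdiag : star z ⬝ᵥ ((Matrix.diagonal fun j => g j x) *ᵥ z) =
          ∑ j, g j x * (z j * z j) := by
        rw [star_trivial]
        simp only [dotProduct, Matrix.mulVec_diagonal]
        exact Finset.sum_congr rfl fun j _ => by ring
      have hform : star z ⬝ᵥ (matQ h g x *ᵥ z) =
          (matH h x *ᵥ u) ⬝ᵥ (matH h x *ᵥ u) + ∑ j, (-(g j x)) * (z j * z j) := by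
        simp only [matQ]
        rw [Matrix.sub_mulVec, dotProduct_sub, hS1, hdiag, sub_eq_add_neg,
          ← Finset.sum_neg_distrib]
        congr 1
        exact Finset.sum_congr rfl fun j _ => by ring
      have h1 : 0 ≤ (matH h x *ᵥ u) ⬝ᵥ (matH h x *ᵥ u) := aux_dot_self_nonneg _
      have h3 : 0 ≤ ∑ j, (-(g j x)) * (z j * z j) :=
        Finset.sum_nonneg fun j _ => mul_nonneg (neg_nonneg.mpr (hxg j)) (mul_self_nonneg _)
      rw [hform]
      rcases lt_or_eq_of_le (add_nonneg h1 h3) with hlt | heq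
      · exact hlt
      exfalso
      have hS10 : (matH h x *ᵥ u) ⬝ᵥ (matH h x *ᵥ u) = 0 := by linarith
      have hS30 : ∑ j, (-(g j x)) * (z j * z j) = 0 := by linarith
      have hHu : matH h x *ᵥ u = 0 := dotProduct_self_eq_zero.mp hS10
      have hz0 : ∀ j, g j x ≠ 0 → z j = 0 := by
        intro j hgj
        have hterm := (Finset.sum_eq_zero_iff_of_nonneg
          (fun j _ => mul_nonneg (neg_nonneg.mpr (hxg j)) (mul_self_nonneg (z j)))).mp
          hS30 j (Finset.mem_univ j)
        rcases mul_eq_zero.mp hterm with h' | h'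
        · exact absurd (neg_eq_zero.mp h') hgj
        · exact mul_self_eq_zero.mp h'
      have hu1 : u = (matA h x)ᵀ *ᵥ (((matA h x * (matA h x)ᵀ)⁻¹ * matA h x) *ᵥ u) := by
        have e0 : matH h x *ᵥ u =
            u - ((matA h x)ᵀ * (matA h x * (matA h x)ᵀ)⁻¹ * matA h x) *ᵥ u := by
          simp only [matH]
          rw [Matrix.sub_mulVec, Matrix.one_mulVec]
        rw [e0] at hHu
        have e1 := sub_eq_zero.mp hHu
        calc u = ((matA h x)ᵀ * (matA h x * (matA h x)ᵀ)⁻¹ * matA h x) *ᵥ u := e1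
          _ = (matA h x)ᵀ *ᵥ (((matA h x * (matA h x)ᵀ)⁻¹ * matA h x) *ᵥ u) := by
              rw [Matrix.mulVec_mulVec]; simp only [Matrix.mul_assoc]
      obtain ⟨y, hy⟩ : ∃ y', y' = ((matA h x * (matA h x)ᵀ)⁻¹ * matA h x) *ᵥ u := ⟨_, rfl⟩
      have hu1' : u = (matA h x)ᵀ *ᵥ y := by rw [hy]; exact hu1
      have hcA : u = ∑ i, y i • grad (h i) x := by
        rw [hu1']; exact aux_tmulVec _ _
      have hcB : u = ∑ j, z j • grad (g j) x := by
        rw [hu]; exact aux_tmulVec _ _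
      have e1 : ∑ j ∈ Finset.univ.filter (fun j => g j x = 0), z j • grad (g j) x
          = ∑ j, z j • grad (g j) x :=
        Finset.sum_filter_of_ne (fun j _ hne => by
          by_contra hgj
          exact hne (by rw [hz0 j hgj, zero_smul]))
      have hsub : ∑ j : {j : Fin k // g j x = 0}, z j.1 • grad (g j.1) x
          = ∑ j, z j • grad (g j) x := by
        rw [← e1]
        exact (Finset.sum_subtype _ (fun j => by simp) (fun j => z j • grad (g j) x)).symm
      have hcomb : ∑ s : Fin m ⊕ {j : Fin k // g j x = 0},
          (Sum.elim y (fun j : {j : Fin k // g j x = 0} => -(z j.1)) s) •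
            (Sum.elim (fun i => grad (h i) x)
              (fun j : {j : Fin k // g j x = 0} => grad (g j.1) x) s) = 0 := by
        rw [Fintype.sum_sum_type]
        simp only [Sum.elim_inl, Sum.elim_inr, neg_smul]
        rw [Finset.sum_neg_distrib, hsub, ← hcA, ← hcB]
        exact add_neg_cancel u
      have hall := Fintype.linearIndependent_iff.mp (hH2 x hx) _ hcomb
      apply hz
      funext j
      simp only [Pi.zero_apply]
      by_cases hgj : g j x = 0
      · simpa using hall (Sum.inr ⟨j, hgj⟩)
      · exact hz0 j hgj
  have hQdet : IsUnit (matQ h g x).det := (Matrix.isUnit_iff_isUnit_det _).mp hQpd.isUnit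
  have hQQ : matQ h g x * (matQ h g x)⁻¹ = 1 := Matrix.mul_nonsing_inv _ hQdet
  have hQiQ : (matQ h g x)⁻¹ * matQ h g x = 1 := Matrix.nonsing_inv_mul _ hQdet
  have hQisym : ((matQ h g x)⁻¹)ᵀ = (matQ h g x)⁻¹ := by
    rw [Matrix.transpose_nonsing_inv, hQsym]
  simp only [vecF]
  exact aux_algebra (matB g x) (matH h x) (R1 x) (matQ h g x) _ _ (R2 x) _ (grad θ x) _ _
    rfl hQQ hQiQ hQisym hHsym (matP h g x) rfl

end
end

section
/- Lyapunov decrease identity (2.7): Under assumptions (H1) and (H2), for every x ∈ S it holds that ∇θ(x)F(x) = −ξ(x)R₁(x)(ξ(x))ᵀ − (diag(g(x))v(x))ᵀR₂(x)diag(g(x))v(x) − Σ_{j=1}^k a_j(x)|g_j(x)|v_j(x)² − Σ_{j=1}^k b_j(x)(max(0, v_j(x)))² − Σ_{j=1}^k c_j(x)(max(0, v_j(x)))^{2p_j+2}, where ξ(x) := ∇θ(x)[H(x) − H(x)B(x)ᵀQ(x)⁻¹B(x)H(x)]; in particular ∇θ(x)F(x) ≤ 0 for all x ∈ S. -/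
open Matrix Set Filter

noncomputable section

lemma matH_symm {n m : ℕ} (h : Fin m → (Fin n → ℝ) → ℝ) (x : Fin n → ℝ) :
    (matH h x)ᵀ = matH h x := by
  unfold matH
  rw [transpose_sub, transpose_one, transpose_mul, transpose_mul, transpose_transpose,
    transpose_nonsing_inv, transpose_mul, transpose_transpose, Matrix.mul_assoc]

lemma matQ_symm {n m k : ℕ} (h : Fin m → (Fin n → ℝ) → ℝ) (g : Fin k → (Fin n → ℝ) → ℝ)
    (x : Fin n → ℝ) : (matQ h g x)ᵀ = matQ h g x := by
  unfold matQ
  rw [transpose_sub, diagonal_transpose, transpose_mul, transpose_mul, transpose_transpose,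
    matH_symm, Matrix.mul_assoc]

lemma matQ_inv_mul_inv {n m k : ℕ} (h : Fin m → (Fin n → ℝ) → ℝ)
    (g : Fin k → (Fin n → ℝ) → ℝ) (x : Fin n → ℝ) :
    (matQ h g x)⁻¹ * matQ h g x * (matQ h g x)⁻¹ = (matQ h g x)⁻¹ := by
  by_cases hQ : IsUnit (matQ h g x).det
  · rw [Matrix.nonsing_inv_mul _ hQ, Matrix.one_mul]
  · rw [Matrix.nonsing_inv_apply_not_isUnit _ hQ, Matrix.zero_mul, Matrix.zero_mul]

lemma matP_transpose {n m k : ℕ} (h : Fin m → (Fin n → ℝ) → ℝ)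
    (g : Fin k → (Fin n → ℝ) → ℝ) (x : Fin n → ℝ) :
    (matP h g x)ᵀ = matH h x * (matB g x)ᵀ * (matQ h g x)⁻¹ := by
  unfold matP
  rw [transpose_mul, transpose_mul, matH_symm, transpose_nonsing_inv, matQ_symm,
    Matrix.mul_assoc]

lemma matM_eq {n m k : ℕ} (h : Fin m → (Fin n → ℝ) → ℝ)
    (g : Fin k → (Fin n → ℝ) → ℝ) (x : Fin n → ℝ) :
    matH h x - (matP h g x)ᵀ * matQ h g x * matP h g x =
      matH h x - matH h x * (matB g x)ᵀ * (matQ h g x)⁻¹ * matB g x * matH h x := by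
  rw [matP_transpose]
  unfold matP
  congr 1
  calc matH h x * (matB g x)ᵀ * (matQ h g x)⁻¹ * matQ h g x * ((matQ h g x)⁻¹ * matB g x * matH h x)
      = matH h x * (matB g x)ᵀ * ((matQ h g x)⁻¹ * matQ h g x * (matQ h g x)⁻¹) * (matB g x * matH h x) := by
        simp only [Matrix.mul_assoc]
    _ = matH h x * (matB g x)ᵀ * (matQ h g x)⁻¹ * matB g x * matH h x := by
        rw [matQ_inv_mul_inv]; simp only [Matrix.mul_assoc]

lemma matN_symm {n m k : ℕ} (h : Fin m → (Fin n → ℝ) → ℝ)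
    (g : Fin k → (Fin n → ℝ) → ℝ) (x : Fin n → ℝ) :
    (matH h x - matH h x * (matB g x)ᵀ * (matQ h g x)⁻¹ * matB g x * matH h x)ᵀ =
      matH h x - matH h x * (matB g x)ᵀ * (matQ h g x)⁻¹ * matB g x * matH h x := by
  rw [transpose_sub, matH_symm]
  congr 1
  simp only [transpose_mul, transpose_transpose, matH_symm, transpose_nonsing_inv, matQ_symm]
  simp only [Matrix.mul_assoc]

lemma pow_max_key (t bb cc : ℝ) (q : ℕ) :
    t * ((bb + cc * (max 0 t) ^ q) * max 0 t) =
      bb * (max 0 t) ^ 2 + cc * (max 0 t) ^ (q + 2) := by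
  rcases le_total t 0 with ht | ht
  · rw [max_eq_left ht]
    simp [zero_pow]
  · rw [max_eq_right ht]
    ring

/-- Identity (2.7): the Lyapunov decrease identity for `∇θ(x)F(x)` on `S`;
in particular `∇θ(x)F(x) ≤ 0` for all `x ∈ S`. -/
theorem stmt_7
    {n m k : ℕ} (hmn : m < n)
    (θ : (Fin n → ℝ) → ℝ) (h : Fin m → (Fin n → ℝ) → ℝ) (g : Fin k → (Fin n → ℝ) → ℝ)
    (hθ : ContDiff ℝ 2 θ) (hhC : ∀ i, ContDiff ℝ 2 (h i)) (hgC : ∀ j, ContDiff ℝ 2 (g j))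
    (hH1 : hypH1 θ h g) (hH2 : hypH2 h g)
    (R1 : (Fin n → ℝ) → Matrix (Fin n) (Fin n) ℝ)
    (R2 : (Fin n → ℝ) → Matrix (Fin k) (Fin k) ℝ)
    (a b c : Fin k → (Fin n → ℝ) → ℝ) (p : Fin k → ℕ)
    (hR1C : ∀ i j, ContDiff ℝ 1 fun x => R1 x i j)
    (hR1pd : ∀ x, (R1 x).PosDef)
    (hR2C : ∀ i j, ContDiff ℝ 1 fun x => R2 x i j)
    (hR2psd : ∀ x, (R2 x).PosSemidef)
    (haC : ∀ j, ContDiff ℝ 1 (a j)) (hbC : ∀ j, ContDiff ℝ 1 (b j))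
    (hcC : ∀ j, ContDiff ℝ 1 (c j))
    (ha0 : ∀ j x, 0 ≤ a j x) (hb0 : ∀ j x, 0 ≤ b j x) (hc0 : ∀ j x, 0 ≤ c j x)
    (hbc : ∀ x ∈ feas h g, ∀ j, 0 < b j x + c j x)
    (hpd : ∀ x ∈ feas h g, (R2 x).PosDef ∨ (Matrix.diagonal fun j => a j x).PosDef)
    (hp : ∀ j, 1 ≤ p j) :
    ∀ x ∈ feas h g,
      (grad θ x ⬝ᵥ vecF θ h g R1 R2 a b c p x =
        -(Matrix.vecMul (grad θ x)
            (matH h x - matH h x * (matB g x)ᵀ * (matQ h g x)⁻¹ * matB g x * matH h x) ⬝ᵥ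
          (R1 x).mulVec (Matrix.vecMul (grad θ x)
            (matH h x - matH h x * (matB g x)ᵀ * (matQ h g x)⁻¹ * matB g x * matH h x)))
        - ((Matrix.diagonal fun j => g j x).mulVec (vecv θ h g x) ⬝ᵥ
            (R2 x).mulVec ((Matrix.diagonal fun j => g j x).mulVec (vecv θ h g x)))
        - (∑ j, a j x * |g j x| * (vecv θ h g x j) ^ 2)
        - (∑ j, b j x * (max 0 (vecv θ h g x j)) ^ 2)
        - (∑ j, c j x * (max 0 (vecv θ h g x j)) ^ (2 * p j + 2))) ∧
      grad θ x ⬝ᵥ vecF θ h g R1 R2 a b c p x ≤ 0 := by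
  intro x hx
  obtain ⟨hhx, hgx⟩ := hx
  set u : Fin n → ℝ := grad θ x with hu
  set v : Fin k → ℝ := vecv θ h g x with hv
  set N : Matrix (Fin n) (Fin n) ℝ :=
    matH h x - matH h x * (matB g x)ᵀ * (matQ h g x)⁻¹ * matB g x * matH h x with hN
  set ξ : Fin n → ℝ := Matrix.vecMul u N with hξ
  set D : Matrix (Fin k) (Fin k) ℝ := Matrix.diagonal (fun j => g j x) with hD
  set Da : Matrix (Fin k) (Fin k) ℝ := Matrix.diagonal (fun j => a j x) with hDa
  -- basic transports
  have hPu : Matrix.vecMul u (matP h g x)ᵀ = v := by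
    rw [Matrix.vecMul_transpose]; rfl
  have hNu : N.mulVec u = ξ := by
    rw [hξ, ← Matrix.mulVec_transpose, matN_symm]
  have hvD : Matrix.vecMul v D = D.mulVec v := by
    funext j
    simp [hD, Matrix.vecMul_diagonal, Matrix.mulVec_diagonal, mul_comm]
  -- Term 1
  have hT1 : u ⬝ᵥ (((matH h x - (matP h g x)ᵀ * matQ h g x * matP h g x) * R1 x *
      (matH h x - (matP h g x)ᵀ * matQ h g x * matP h g x)).mulVec u) =
      ξ ⬝ᵥ (R1 x).mulVec ξ := by
    rw [matM_eq, ← hN, ← Matrix.mulVec_mulVec, ← Matrix.mulVec_mulVec,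
      Matrix.dotProduct_mulVec, hNu]
  -- Term 2
  have hT2 : u ⬝ᵥ (((matP h g x)ᵀ * D * (R2 x * D - Da)).mulVec v) =
      (D.mulVec v ⬝ᵥ (R2 x).mulVec (D.mulVec v)) -
        ∑ j, g j x * (a j x * v j ^ 2) := by
    rw [Matrix.mul_assoc, ← Matrix.mulVec_mulVec, Matrix.dotProduct_mulVec, hPu,
      Matrix.mul_sub, ← Matrix.mul_assoc, Matrix.sub_mulVec, dotProduct_sub]
    congr 1
    · rw [← Matrix.mulVec_mulVec, ← Matrix.mulVec_mulVec, Matrix.dotProduct_mulVec, hvD]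
    · rw [hD, hDa, Matrix.diagonal_mul_diagonal]
      simp only [dotProduct, Matrix.mulVec_diagonal]
      exact Finset.sum_congr rfl fun j _ => by ring
  -- Term 3
  have hT3 : u ⬝ᵥ (((matP h g x)ᵀ * matR3 b c p x v).mulVec (pPart v)) =
      (∑ j, b j x * (max 0 (v j)) ^ 2) +
        ∑ j, c j x * (max 0 (v j)) ^ (2 * p j + 2) := by
    rw [← Matrix.mulVec_mulVec, Matrix.dotProduct_mulVec, hPu, ← Finset.sum_add_distrib]
    simp only [dotProduct, matR3, Matrix.mulVec_diagonal, pPart]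
    exact Finset.sum_congr rfl fun j _ => pow_max_key (v j) (b j x) (c j x) (2 * p j)
  -- the sign conversion for the a-term
  have hAbs : ∀ j, a j x * |g j x| * v j ^ 2 = -(g j x * (a j x * v j ^ 2)) := by
    intro j
    rw [abs_of_nonpos (hgx j)]; ring
  have hId : u ⬝ᵥ vecF θ h g R1 R2 a b c p x =
      -(ξ ⬝ᵥ (R1 x).mulVec ξ)
      - (D.mulVec v ⬝ᵥ (R2 x).mulVec (D.mulVec v))
      - (∑ j, a j x * |g j x| * v j ^ 2)
      - (∑ j, b j x * (max 0 (v j)) ^ 2)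
      - (∑ j, c j x * (max 0 (v j)) ^ (2 * p j + 2)) := by
    unfold vecF
    rw [show (Matrix.diagonal fun j => g j x) = D from rfl,
      show (Matrix.diagonal fun j => a j x) = Da from rfl, ← hv, ← hu,
      dotProduct_sub, dotProduct_sub, dotProduct_neg, hT1, hT2, hT3]
    have : (∑ j, a j x * |g j x| * v j ^ 2) = -∑ j, g j x * (a j x * v j ^ 2) := by
      rw [← Finset.sum_neg_distrib]
      exact Finset.sum_congr rfl fun j _ => hAbs j
    rw [this]; ring
  refine ⟨hId, ?_⟩
  rw [hId]
  have h1 : 0 ≤ ξ ⬝ᵥ (R1 x).mulVec ξ := by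
    have := (hR1pd x).posSemidef.dotProduct_mulVec_nonneg ξ
    simpa using this
  have h2 : 0 ≤ D.mulVec v ⬝ᵥ (R2 x).mulVec (D.mulVec v) := by
    have := (hR2psd x).dotProduct_mulVec_nonneg (D.mulVec v)
    simpa using this
  have h3 : 0 ≤ ∑ j, a j x * |g j x| * v j ^ 2 :=
    Finset.sum_nonneg fun j _ => by
      have := ha0 j x; positivity
  have h4 : 0 ≤ ∑ j, b j x * (max 0 (v j)) ^ 2 :=
    Finset.sum_nonneg fun j _ => by
      have := hb0 j x; positivity
  have h5 : 0 ≤ ∑ j, c j x * (max 0 (v j)) ^ (2 * p j + 2) :=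
    Finset.sum_nonneg fun j _ => by
      have := hc0 j x; positivity
  linarith

end
end

section
/- Theorem 2.3(b): Under assumptions (H1) and (H2), for every x ∈ S that is not a KKT point (x ∈ S \ Φ) it holds that ∇θ(x)F(x) < 0. -/
open Matrix Set Filter

noncomputable section

private lemma dotTmul {n k : ℕ} (A : Matrix (Fin k) (Fin n) ℝ) (u : Fin n → ℝ) (w : Fin k → ℝ) :
    u ⬝ᵥ (Aᵀ *ᵥ w) = (A *ᵥ u) ⬝ᵥ w := by
  rw [Matrix.dotProduct_mulVec, ← Matrix.mulVec_transpose, transpose_transpose]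

private lemma dotMulv {n k : ℕ} (A : Matrix (Fin k) (Fin n) ℝ) (u : Fin k → ℝ) (w : Fin n → ℝ) :
    u ⬝ᵥ (A *ᵥ w) = (Aᵀ *ᵥ u) ⬝ᵥ w := by
  rw [Matrix.dotProduct_mulVec, ← Matrix.mulVec_transpose]

private lemma sandwich {n : ℕ} (M : Matrix (Fin n) (Fin n) ℝ) (N : Matrix (Fin n) (Fin n) ℝ)
    (hM : Mᵀ = M) (u : Fin n → ℝ) :
    u ⬝ᵥ (M * N * M) *ᵥ u = (M *ᵥ u) ⬝ᵥ (N *ᵥ (M *ᵥ u)) := by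
  rw [← Matrix.mulVec_mulVec, ← Matrix.mulVec_mulVec, Matrix.dotProduct_mulVec,
    ← Matrix.mulVec_transpose, hM]

private lemma rowsSum {n m : ℕ} (M : Matrix (Fin m) (Fin n) ℝ) (c : Fin m → ℝ) :
    ∑ i, c i • M i = Mᵀ *ᵥ c := by
  funext j
  simp [Matrix.mulVec, dotProduct, Finset.sum_apply, mul_comm]

private lemma projT {n m : ℕ} (A : Matrix (Fin m) (Fin n) ℝ) :
    (1 - Aᵀ * (A * Aᵀ)⁻¹ * A)ᵀ = 1 - Aᵀ * (A * Aᵀ)⁻¹ * A := by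
  have h1 : ((A * Aᵀ)⁻¹)ᵀ = (A * Aᵀ)⁻¹ := by
    rw [Matrix.transpose_nonsing_inv, transpose_mul, transpose_transpose]
  simp [Matrix.transpose_sub, Matrix.transpose_mul, h1, Matrix.mul_assoc]

private lemma projAt {n m : ℕ} (A : Matrix (Fin m) (Fin n) ℝ) (hdet : IsUnit (A * Aᵀ).det) :
    (1 - Aᵀ * (A * Aᵀ)⁻¹ * A) * Aᵀ = 0 := by
  have h1 : (A * Aᵀ)⁻¹ * (A * Aᵀ) = 1 := Matrix.nonsing_inv_mul _ hdet
  rw [Matrix.sub_mul, Matrix.one_mul, Matrix.mul_assoc, Matrix.mul_assoc,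
    h1, Matrix.mul_one, sub_self]

private lemma projIdem {n m : ℕ} (A : Matrix (Fin m) (Fin n) ℝ) (hdet : IsUnit (A * Aᵀ).det) :
    (1 - Aᵀ * (A * Aᵀ)⁻¹ * A) * (1 - Aᵀ * (A * Aᵀ)⁻¹ * A) = (1 - Aᵀ * (A * Aᵀ)⁻¹ * A) := by
  have h2 := projAt A hdet
  rw [Matrix.mul_sub, Matrix.mul_one, Matrix.mul_assoc Aᵀ ((A * Aᵀ)⁻¹) A,
    ← Matrix.mul_assoc _ Aᵀ ((A * Aᵀ)⁻¹ * A), ← Matrix.mul_assoc Aᵀ ((A * Aᵀ)⁻¹) A, h2,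
    Matrix.zero_mul, sub_zero]

private lemma quadProj {n : ℕ} (H : Matrix (Fin n) (Fin n) ℝ) (hT : Hᵀ = H) (hI : H * H = H)
    (w : Fin n → ℝ) : w ⬝ᵥ (H *ᵥ w) = (H *ᵥ w) ⬝ᵥ (H *ᵥ w) := by
  conv_lhs => rw [← hI, ← Matrix.mulVec_mulVec, dotMulv, hT]

private lemma mul_max_sq (r : ℝ) : r * max 0 r = (max 0 r) ^ 2 := by
  rcases le_total r 0 with hr | hr
  · rw [max_eq_left hr]; ring
  · rw [max_eq_right hr]; ring

private lemma key_lemma {n m k : ℕ}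
    (A : Matrix (Fin m) (Fin n) ℝ) (B : Matrix (Fin k) (Fin n) ℝ)
    (gv : Fin k → ℝ) (u : Fin n → ℝ)
    (R1 : Matrix (Fin n) (Fin n) ℝ) (R2 : Matrix (Fin k) (Fin k) ℝ)
    (av bv cv : Fin k → ℝ) (p : Fin k → ℕ)
    (H : Matrix (Fin n) (Fin n) ℝ) (Q : Matrix (Fin k) (Fin k) ℝ)
    (P : Matrix (Fin k) (Fin n) ℝ) (v : Fin k → ℝ) (R3 : Matrix (Fin k) (Fin k) ℝ)
    (hHd : H = 1 - Aᵀ * (A * Aᵀ)⁻¹ * A)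
    (hQd : Q = B * H * Bᵀ - Matrix.diagonal gv)
    (hPd : P = Q⁻¹ * B * H)
    (hvd : v = P *ᵥ u)
    (hR3d : R3 = Matrix.diagonal (fun j => bv j + cv j * (max 0 (v j)) ^ (2 * p j)))
    (hg : ∀ j, gv j ≤ 0)
    (hli : LinearIndependent ℝ (Sum.elim (fun i : Fin m => A i)
      (fun j : {j : Fin k // gv j = 0} => B (j : Fin k))))
    (hR1pd : R1.PosDef) (hR2psd : R2.PosSemidef)
    (ha0 : ∀ j, 0 ≤ av j) (hb0 : ∀ j, 0 ≤ bv j) (hc0 : ∀ j, 0 ≤ cv j)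
    (hbc : ∀ j, 0 < bv j + cv j)
    (hpd : R2.PosDef ∨ (Matrix.diagonal av).PosDef)
    (hnk : ¬ ∃ (lam : Fin m → ℝ) (mu : Fin k → ℝ), (∀ j, 0 ≤ mu j) ∧
        u + Aᵀ *ᵥ lam + Bᵀ *ᵥ mu = 0 ∧ (∑ j, mu j * gv j) = 0) :
    u ⬝ᵥ (-(((H - Pᵀ * Q * P) * R1 * (H - Pᵀ * Q * P)) *ᵥ u)
      - ((Pᵀ * Matrix.diagonal gv * (R2 * Matrix.diagonal gv - Matrix.diagonal av)) *ᵥ v)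
      - ((Pᵀ * R3) *ᵥ (fun j => max 0 (v j)))) < 0 := by
  classical
  -- linear independence of the rows of A
  have hliA : LinearIndependent ℝ (fun i : Fin m => A i) :=
    hli.comp Sum.inl Sum.inl_injective
  -- A * Aᵀ is positive definite
  have hAAt : (A * Aᵀ).PosDef := by
    apply Matrix.PosDef.of_dotProduct_mulVec_pos
    · rw [Matrix.IsHermitian, conjTranspose_eq_transpose_of_trivial, transpose_mul,
        transpose_transpose]
    · intro z hz
      have hAz : Aᵀ *ᵥ z ≠ 0 := by
        intro h0
        refine hz (funext fun i => ?_)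
        refine Fintype.linearIndependent_iff.mp hliA z ?_ i
        rw [rowsSum A z]; exact h0
      have e1 : star z ⬝ᵥ (A * Aᵀ) *ᵥ z = (Aᵀ *ᵥ z) ⬝ᵥ (Aᵀ *ᵥ z) := by
        rw [star_trivial, ← Matrix.mulVec_mulVec, dotMulv]
      rw [e1]
      have hnn : 0 ≤ (Aᵀ *ᵥ z) ⬝ᵥ (Aᵀ *ᵥ z) := Finset.sum_nonneg fun i _ => mul_self_nonneg _
      rcases hnn.lt_or_eq with hlt | heq
      · exact hlt
      · exact absurd (dotProduct_self_eq_zero.mp heq.symm) hAz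
  have hdetA : IsUnit (A * Aᵀ).det := (Matrix.isUnit_iff_isUnit_det _).mp hAAt.isUnit
  have hHt : Hᵀ = H := by rw [hHd]; exact projT A
  have hHH : H * H = H := by rw [hHd]; exact projIdem A hdetA
  have hGt : (Matrix.diagonal gv)ᵀ = Matrix.diagonal gv := Matrix.diagonal_transpose gv
  have hQsym : Qᵀ = Q := by
    rw [hQd, transpose_sub, transpose_mul, transpose_mul, transpose_transpose, hHt,
      Matrix.diagonal_transpose, Matrix.mul_assoc]
  -- Q is positive definite
  have hQpd : Q.PosDef := by
    apply Matrix.PosDef.of_dotProduct_mulVec_pos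
    · rw [Matrix.IsHermitian, conjTranspose_eq_transpose_of_trivial, hQsym]
    · intro z hz
      have e1 : z ⬝ᵥ (B * H * Bᵀ) *ᵥ z = (H *ᵥ (Bᵀ *ᵥ z)) ⬝ᵥ (H *ᵥ (Bᵀ *ᵥ z)) := by
        rw [← Matrix.mulVec_mulVec, ← Matrix.mulVec_mulVec, dotMulv, quadProj H hHt hHH]
      have e2 : z ⬝ᵥ (Matrix.diagonal gv) *ᵥ z = ∑ j, gv j * (z j * z j) := by
        simp only [dotProduct, Matrix.mulVec_diagonal]
        exact Finset.sum_congr rfl fun j _ => by ring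
      have hsplit : star z ⬝ᵥ Q *ᵥ z
          = (H *ᵥ (Bᵀ *ᵥ z)) ⬝ᵥ (H *ᵥ (Bᵀ *ᵥ z)) + ∑ j, (-(gv j)) * (z j * z j) := by
        rw [star_trivial, hQd, Matrix.sub_mulVec, dotProduct_sub, e1, e2, sub_eq_add_neg,
          ← Finset.sum_neg_distrib]
        exact congrArg _ (Finset.sum_congr rfl fun j _ => by ring)
      have h1nn : 0 ≤ (H *ᵥ (Bᵀ *ᵥ z)) ⬝ᵥ (H *ᵥ (Bᵀ *ᵥ z)) :=
        Finset.sum_nonneg fun i _ => mul_self_nonneg _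
      have h2nn : 0 ≤ ∑ j, (-(gv j)) * (z j * z j) :=
        Finset.sum_nonneg fun j _ => mul_nonneg (neg_nonneg.mpr (hg j)) (mul_self_nonneg _)
      rw [hsplit]
      by_contra hle
      push_neg at hle
      have hz1 : (H *ᵥ (Bᵀ *ᵥ z)) ⬝ᵥ (H *ᵥ (Bᵀ *ᵥ z)) = 0 := le_antisymm (by linarith) h1nn
      have hz2 : (∑ j, (-(gv j)) * (z j * z j)) = 0 := le_antisymm (by linarith) h2nn
      have hHw : H *ᵥ (Bᵀ *ᵥ z) = 0 := dotProduct_self_eq_zero.mp hz1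
      have hzj : ∀ jj, gv jj ≠ 0 → z jj = 0 := by
        intro jj hjj
        have hterm := (Finset.sum_eq_zero_iff_of_nonneg
          (fun j _ => mul_nonneg (neg_nonneg.mpr (hg j)) (mul_self_nonneg (z j)))).mp hz2 jj
          (Finset.mem_univ _)
        rcases mul_eq_zero.mp hterm with h' | h'
        · exact absurd (neg_eq_zero.mp h') hjj
        · exact mul_self_eq_zero.mp h'
      have hw : Bᵀ *ᵥ z = Aᵀ *ᵥ (((A * Aᵀ)⁻¹ * A) *ᵥ (Bᵀ *ᵥ z)) := by
        have e : H *ᵥ (Bᵀ *ᵥ z)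
            = Bᵀ *ᵥ z - Aᵀ *ᵥ (((A * Aᵀ)⁻¹ * A) *ᵥ (Bᵀ *ᵥ z)) := by
          rw [hHd, Matrix.sub_mulVec, Matrix.one_mulVec, Matrix.mul_assoc,
            ← Matrix.mulVec_mulVec]
        rw [e] at hHw
        exact sub_eq_zero.mp hHw
      set cc : Fin m → ℝ := ((A * Aᵀ)⁻¹ * A) *ᵥ (Bᵀ *ᵥ z) with hcc
      have hcomb : ∑ s, (Sum.elim cc (fun j : {j : Fin k // gv j = 0} => -(z j.1))) s •
          (Sum.elim (fun i : Fin m => A i)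
            (fun j : {j : Fin k // gv j = 0} => B (j : Fin k))) s = 0 := by
        rw [Fintype.sum_sum_type]
        simp only [Sum.elim_inl, Sum.elim_inr]
        have eA : (∑ i, cc i • A i) = Aᵀ *ᵥ cc := rowsSum A cc
        have eB : (∑ j : {j : Fin k // gv j = 0}, (-(z j.1)) • B j.1) = -(Bᵀ *ᵥ z) := by
          have e0 : (∑ j ∈ Finset.univ.filter (fun j => gv j = 0), z j • B j)
              = ∑ j : {j : Fin k // gv j = 0}, z j.1 • B j.1 :=
            Finset.sum_subtype _ (fun j => by simp) (fun j => z j • B j)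
          have e1 : (∑ j ∈ Finset.univ.filter (fun j => gv j = 0), z j • B j)
              = ∑ j, z j • B j := by
            apply Finset.sum_filter_of_ne
            intro j _ hne
            by_contra hgj
            exact hne (by rw [hzj j hgj, zero_smul])
          calc (∑ j : {j : Fin k // gv j = 0}, (-(z j.1)) • B j.1)
              = -(∑ j : {j : Fin k // gv j = 0}, z j.1 • B j.1) := by
                rw [← Finset.sum_neg_distrib]
                exact Finset.sum_congr rfl fun j _ => by rw [neg_smul]
            _ = -(Bᵀ *ᵥ z) := by rw [← e0, e1, rowsSum B z]
        rw [eA, eB, hw, add_neg_cancel]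
      have hall := Fintype.linearIndependent_iff.mp hli _ hcomb
      refine hz (funext fun j => ?_)
      by_cases hgj : gv j = 0
      · have := hall (Sum.inr ⟨j, hgj⟩)
        simpa using this
      · exact hzj j hgj
  have hdetQ : IsUnit Q.det := (Matrix.isUnit_iff_isUnit_det _).mp hQpd.isUnit
  have hQiQ : Q⁻¹ * Q = 1 := Matrix.nonsing_inv_mul _ hdetQ
  have hQinvT : (Q⁻¹)ᵀ = Q⁻¹ := by rw [Matrix.transpose_nonsing_inv, hQsym]
  have hPt : Pᵀ = H * Bᵀ * Q⁻¹ := by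
    rw [hPd, transpose_mul, transpose_mul, hHt, hQinvT, Matrix.mul_assoc]
  have hPQP : Pᵀ * Q * P = H * Bᵀ * P := by
    rw [hPt, Matrix.mul_assoc (H * Bᵀ) Q⁻¹ Q, hQiQ, Matrix.mul_one]
  set M : Matrix (Fin n) (Fin n) ℝ := H - Pᵀ * Q * P with hMd
  have hMt : Mᵀ = M := by
    rw [hMd, transpose_sub, hHt, transpose_mul, transpose_mul, transpose_transpose, hQsym,
      Matrix.mul_assoc]
  set s1 : ℝ := (M *ᵥ u) ⬝ᵥ (R1 *ᵥ (M *ᵥ u)) with hs1d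
  set s2 : ℝ := ((Matrix.diagonal gv) *ᵥ v) ⬝ᵥ (R2 *ᵥ ((Matrix.diagonal gv) *ᵥ v)) with hs2d
  set s3 : ℝ := ∑ j, (-(gv j)) * (av j * (v j * v j)) with hs3d
  set s4 : ℝ := ∑ j, (bv j + cv j * (max 0 (v j)) ^ (2 * p j)) * (max 0 (v j)) ^ 2 with hs4d
  have hvP : ∀ w : Fin k → ℝ, u ⬝ᵥ (Pᵀ *ᵥ w) = v ⬝ᵥ w := by
    intro w
    rw [dotTmul, ← hvd]
  have key : u ⬝ᵥ (-(((H - Pᵀ * Q * P) * R1 * (H - Pᵀ * Q * P)) *ᵥ u)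
      - ((Pᵀ * Matrix.diagonal gv * (R2 * Matrix.diagonal gv - Matrix.diagonal av)) *ᵥ v)
      - ((Pᵀ * R3) *ᵥ (fun j => max 0 (v j)))) = -(s1 + s2 + s3 + s4) := by
    have t1 : u ⬝ᵥ ((M * R1 * M) *ᵥ u) = s1 := sandwich M R1 hMt u
    have t2 : u ⬝ᵥ ((Pᵀ * Matrix.diagonal gv *
        (R2 * Matrix.diagonal gv - Matrix.diagonal av)) *ᵥ v) = s2 + s3 := by
      have e0 : (Pᵀ * Matrix.diagonal gv * (R2 * Matrix.diagonal gv - Matrix.diagonal av)) *ᵥ v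
          = Pᵀ *ᵥ ((Matrix.diagonal gv * (R2 * Matrix.diagonal gv - Matrix.diagonal av)) *ᵥ v) := by
        rw [Matrix.mul_assoc, ← Matrix.mulVec_mulVec]
      rw [e0, hvP]
      have e1 : (Matrix.diagonal gv * (R2 * Matrix.diagonal gv - Matrix.diagonal av))
          = Matrix.diagonal gv * R2 * Matrix.diagonal gv
            - Matrix.diagonal (fun j => gv j * av j) := by
        rw [Matrix.mul_sub, Matrix.diagonal_mul_diagonal, ← Matrix.mul_assoc]
      rw [e1, Matrix.sub_mulVec, dotProduct_sub,
        sandwich (Matrix.diagonal gv) R2 hGt v]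
      have e2 : v ⬝ᵥ (Matrix.diagonal (fun j => gv j * av j)) *ᵥ v = -s3 := by
        simp only [dotProduct, Matrix.mulVec_diagonal, hs3d, ← Finset.sum_neg_distrib]
        exact Finset.sum_congr rfl fun j _ => by ring
      rw [e2, hs2d, sub_neg_eq_add]
    have t3 : u ⬝ᵥ ((Pᵀ * R3) *ᵥ (fun j => max 0 (v j))) = s4 := by
      rw [← Matrix.mulVec_mulVec, hvP, hR3d, hs4d]
      simp only [dotProduct, Matrix.mulVec_diagonal]
      refine Finset.sum_congr rfl fun j _ => ?_
      rw [show v j * ((bv j + cv j * max 0 (v j) ^ (2 * p j)) * max 0 (v j))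
          = (bv j + cv j * max 0 (v j) ^ (2 * p j)) * (v j * max 0 (v j)) from by ring,
        mul_max_sq]
    rw [dotProduct_sub, dotProduct_sub, dotProduct_neg, ← hMd, t1, t2, t3]
    ring
  have h1nn : 0 ≤ s1 := by
    have := hR1pd.posSemidef.dotProduct_mulVec_nonneg (M *ᵥ u)
    rwa [star_trivial] at this
  have h2nn : 0 ≤ s2 := by
    have := hR2psd.dotProduct_mulVec_nonneg ((Matrix.diagonal gv) *ᵥ v)
    rwa [star_trivial] at this
  have h3nn : 0 ≤ s3 := Finset.sum_nonneg fun j _ =>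
    mul_nonneg (neg_nonneg.mpr (hg j)) (mul_nonneg (ha0 j) (mul_self_nonneg _))
  have h4nn : 0 ≤ s4 := Finset.sum_nonneg fun j _ =>
    mul_nonneg (add_nonneg (hb0 j) (mul_nonneg (hc0 j)
      (pow_nonneg (le_max_left 0 _) _))) (sq_nonneg _)
  have hle : u ⬝ᵥ (-(((H - Pᵀ * Q * P) * R1 * (H - Pᵀ * Q * P)) *ᵥ u)
      - ((Pᵀ * Matrix.diagonal gv * (R2 * Matrix.diagonal gv - Matrix.diagonal av)) *ᵥ v)
      - ((Pᵀ * R3) *ᵥ (fun j => max 0 (v j)))) ≤ 0 := by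
    rw [key]; linarith
  refine hle.lt_of_ne ?_
  intro h0
  rw [key] at h0
  have hz1 : s1 = 0 := by linarith
  have hz2 : s2 = 0 := by linarith
  have hz3 : s3 = 0 := by linarith
  have hz4 : s4 = 0 := by linarith
  have hMu : M *ᵥ u = 0 := by
    by_contra hne
    have hpos := hR1pd.dotProduct_mulVec_pos hne
    rw [star_trivial, ← hs1d] at hpos
    linarith
  have hvle : ∀ j, max 0 (v j) = 0 := by
    intro j
    have hterm := (Finset.sum_eq_zero_iff_of_nonneg (fun j _ =>
      mul_nonneg (add_nonneg (hb0 j) (mul_nonneg (hc0 j)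
        (pow_nonneg (le_max_left 0 _) _))) (sq_nonneg _))).mp (hs4d ▸ hz4) j (Finset.mem_univ _)
    by_contra hne
    have hmpos : 0 < max 0 (v j) := lt_of_le_of_ne (le_max_left 0 _) (Ne.symm hne)
    have h2pos : 0 < (max 0 (v j)) ^ 2 := pow_pos hmpos 2
    have hco : bv j + cv j * max 0 (v j) ^ (2 * p j) = 0 := by
      rcases mul_eq_zero.mp hterm with h' | h'
      · exact h'
      · exact absurd h' h2pos.ne'
    have hbz : bv j = 0 ∧ cv j * max 0 (v j) ^ (2 * p j) = 0 :=
      (add_eq_zero_iff_of_nonneg (hb0 j)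
        (mul_nonneg (hc0 j) (pow_nonneg (le_max_left 0 _) _))).mp hco
    have hcz : cv j = 0 := by
      rcases mul_eq_zero.mp hbz.2 with h' | h'
      · exact h'
      · exact absurd h' (pow_pos hmpos _).ne'
    have := hbc j
    rw [hbz.1, hcz] at this
    simp at this
  have hvle' : ∀ j, v j ≤ 0 := fun j => (le_max_right 0 (v j)).trans (le_of_eq (hvle j))
  have hcompl : ∀ j, gv j * v j = 0 := by
    rcases hpd with hR2pd | hapd
    · have hGv : (Matrix.diagonal gv) *ᵥ v = 0 := by
        by_contra hne
        have hpos := hR2pd.dotProduct_mulVec_pos hne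
        rw [star_trivial, ← hs2d] at hpos
        linarith
      intro j
      have := congrFun hGv j
      simpa [Matrix.mulVec_diagonal] using this
    · have hav : ∀ j, 0 < av j := Matrix.posDef_diagonal_iff.mp hapd
      intro j
      have hterm := (Finset.sum_eq_zero_iff_of_nonneg (fun j _ =>
        mul_nonneg (neg_nonneg.mpr (hg j)) (mul_nonneg (ha0 j)
          (mul_self_nonneg (v j))))).mp (hs3d ▸ hz3) j (Finset.mem_univ _)
      rcases mul_eq_zero.mp hterm with h' | h'
      · rw [neg_eq_zero.mp h', zero_mul]
      · rcases mul_eq_zero.mp h' with h'' | h''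
        · exact absurd h'' (hav j).ne'
        · rw [mul_self_eq_zero.mp h'', mul_zero]
  set w0 : Fin n → ℝ := u - Bᵀ *ᵥ v with hw0
  have hHu : H *ᵥ w0 = 0 := by
    have h1 : H *ᵥ u = (Pᵀ * Q * P) *ᵥ u := by
      rw [hMd, Matrix.sub_mulVec] at hMu
      exact sub_eq_zero.mp hMu
    have h2 : (Pᵀ * Q * P) *ᵥ u = H *ᵥ (Bᵀ *ᵥ v) := by
      rw [hPQP, ← Matrix.mulVec_mulVec, ← Matrix.mulVec_mulVec, ← hvd]
    rw [hw0, Matrix.mulVec_sub, h1, h2, sub_self]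
  have hwr : w0 = Aᵀ *ᵥ (((A * Aᵀ)⁻¹ * A) *ᵥ w0) := by
    have e : H *ᵥ w0 = w0 - Aᵀ *ᵥ (((A * Aᵀ)⁻¹ * A) *ᵥ w0) := by
      rw [hHd, Matrix.sub_mulVec, Matrix.one_mulVec, Matrix.mul_assoc, ← Matrix.mulVec_mulVec]
    rw [e] at hHu
    exact sub_eq_zero.mp hHu
  refine absurd ?_ hnk
  refine ⟨-(((A * Aᵀ)⁻¹ * A) *ᵥ w0), -v, fun j => neg_nonneg.2 (hvle' j), ?_, ?_⟩
  · rw [Matrix.mulVec_neg, Matrix.mulVec_neg, ← hwr, hw0]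
    abel
  · refine Finset.sum_eq_zero fun j _ => ?_
    rw [Pi.neg_apply, neg_mul, mul_comm, hcompl j, neg_zero]


/-- Theorem 2.3(b): `∇θ(x)F(x) < 0` for every `x ∈ S \ Φ`. -/
theorem stmt_8
    {n m k : ℕ} (hmn : m < n)
    (θ : (Fin n → ℝ) → ℝ) (h : Fin m → (Fin n → ℝ) → ℝ) (g : Fin k → (Fin n → ℝ) → ℝ)
    (hθ : ContDiff ℝ 2 θ) (hhC : ∀ i, ContDiff ℝ 2 (h i)) (hgC : ∀ j, ContDiff ℝ 2 (g j))
    (hH1 : hypH1 θ h g) (hH2 : hypH2 h g)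
    (R1 : (Fin n → ℝ) → Matrix (Fin n) (Fin n) ℝ)
    (R2 : (Fin n → ℝ) → Matrix (Fin k) (Fin k) ℝ)
    (a b c : Fin k → (Fin n → ℝ) → ℝ) (p : Fin k → ℕ)
    (hR1C : ∀ i j, ContDiff ℝ 1 fun x => R1 x i j)
    (hR1pd : ∀ x, (R1 x).PosDef)
    (hR2C : ∀ i j, ContDiff ℝ 1 fun x => R2 x i j)
    (hR2psd : ∀ x, (R2 x).PosSemidef)
    (haC : ∀ j, ContDiff ℝ 1 (a j)) (hbC : ∀ j, ContDiff ℝ 1 (b j))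
    (hcC : ∀ j, ContDiff ℝ 1 (c j))
    (ha0 : ∀ j x, 0 ≤ a j x) (hb0 : ∀ j x, 0 ≤ b j x) (hc0 : ∀ j x, 0 ≤ c j x)
    (hbc : ∀ x ∈ feas h g, ∀ j, 0 < b j x + c j x)
    (hpd : ∀ x ∈ feas h g, (R2 x).PosDef ∨ (Matrix.diagonal fun j => a j x).PosDef)
    (hp : ∀ j, 1 ≤ p j) :
    ∀ x ∈ feas h g, x ∉ KKTset θ h g →
      grad θ x ⬝ᵥ vecF θ h g R1 R2 a b c p x < 0 := by
  intro x hx hnk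
  have hli : LinearIndependent ℝ (Sum.elim (fun i : Fin m => (matA h x) i)
      (fun j : {j : Fin k // g j x = 0} => (matB g x) (j : Fin k))) := hH2 x hx
  have hnk' : ¬ ∃ (lam : Fin m → ℝ) (mu : Fin k → ℝ), (∀ j, 0 ≤ mu j) ∧
      grad θ x + (matA h x)ᵀ *ᵥ lam + (matB g x)ᵀ *ᵥ mu = 0 ∧
      (∑ j, mu j * g j x) = 0 := by
    rintro ⟨lam, mu, hmu, heq, hc⟩
    refine hnk ⟨hx, lam, mu, hmu, ?_, hc⟩
    have e1 : (∑ i, lam i • grad (h i) x) = (matA h x)ᵀ *ᵥ lam := rowsSum (matA h x) lam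
    have e2 : (∑ j, mu j • grad (g j) x) = (matB g x)ᵀ *ᵥ mu := rowsSum (matB g x) mu
    rw [e1, e2]
    exact heq
  exact key_lemma (matA h x) (matB g x) (fun j => g j x) (grad θ x) (R1 x) (R2 x)
    (fun j => a j x) (fun j => b j x) (fun j => c j x) p
    (matH h x) (matQ h g x) (matP h g x) (vecv θ h g x)
    (matR3 b c p x (vecv θ h g x))
    rfl rfl rfl rfl rfl
    (fun j => hx.2 j) hli (hR1pd x) (hR2psd x)
    (fun j => ha0 j x) (fun j => hb0 j x) (fun j => hc0 j x)
    (fun j => hbc x hx j) (hpd x hx) hnk'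

end
end

section
/- Theorem 2.3(c): Under assumptions (H1) and (H2), for every x ∈ S it holds that F(x) = 0 if and only if x ∈ Φ, i.e., the equilibrium points of F on S are exactly the KKT points of the nonlinear programming problem. -/
open Matrix Set Filter

noncomputable section

lemma tmv {m n : ℕ} (M : Matrix (Fin m) (Fin n) ℝ) (w : Fin m → ℝ) :
    Mᵀ *ᵥ w = ∑ i, w i • M i := by
  funext j
  simp [Matrix.mulVec, dotProduct, Finset.sum_apply, mul_comm]

lemma dot_tmv {m n : ℕ} (M : Matrix (Fin m) (Fin n) ℝ) (x : Fin n → ℝ) (y : Fin m → ℝ) :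
    x ⬝ᵥ (Mᵀ *ᵥ y) = (M *ᵥ x) ⬝ᵥ y := by
  rw [Matrix.dotProduct_mulVec, Matrix.vecMul_transpose]

lemma dot_symm {n : ℕ} (S : Matrix (Fin n) (Fin n) ℝ) (hS : Sᵀ = S) (x y : Fin n → ℝ) :
    x ⬝ᵥ (S *ᵥ y) = (S *ᵥ x) ⬝ᵥ y := by
  rw [← hS, dot_tmv, hS]

lemma gram_quad {m n : ℕ} (M : Matrix (Fin m) (Fin n) ℝ) (z : Fin m → ℝ) :
    z ⬝ᵥ ((M * Mᵀ) *ᵥ z) = (Mᵀ *ᵥ z) ⬝ᵥ (Mᵀ *ᵥ z) := by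
  rw [← Matrix.mulVec_mulVec, Matrix.dotProduct_mulVec, ← Matrix.mulVec_transpose]

lemma gram_posDef {m n : ℕ} (M : Matrix (Fin m) (Fin n) ℝ)
    (hli : LinearIndependent ℝ (fun i => M i)) : (M * Mᵀ).PosDef := by
  refine posDef_iff_dotProduct_mulVec.mpr ⟨?_, ?_⟩
  · simp [Matrix.IsHermitian, Matrix.conjTranspose_eq_transpose_of_trivial,
      Matrix.transpose_mul]
  · intro z hz
    have h1 : Mᵀ *ᵥ z ≠ 0 := by
      intro h0
      apply hz
      rw [tmv] at h0
      have := Fintype.linearIndependent_iff.1 hli z h0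
      funext i; exact this i
    have h2 : star z ⬝ᵥ ((M * Mᵀ) *ᵥ z) = (Mᵀ *ᵥ z) ⬝ᵥ (Mᵀ *ᵥ z) := by
      rw [star_trivial, gram_quad]
    rw [h2]
    have h3 : 0 ≤ (Mᵀ *ᵥ z) ⬝ᵥ (Mᵀ *ᵥ z) := Finset.sum_nonneg fun i _ => mul_self_nonneg _
    rcases h3.lt_or_eq with h | h
    · exact h
    · exact absurd (dotProduct_self_eq_zero.1 h.symm) h1

lemma mul_max_self (t : ℝ) : t * max 0 t = max 0 t * max 0 t := by
  rcases le_total t 0 with ht | ht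
  · rw [max_eq_left ht]; ring
  · rw [max_eq_right ht]

set_option maxHeartbeats 1000000 in
lemma core {n m k : ℕ}
    (A : Matrix (Fin m) (Fin n) ℝ) (B : Matrix (Fin k) (Fin n) ℝ)
    (gv : Fin k → ℝ)
    (H : Matrix (Fin n) (Fin n) ℝ) (Q : Matrix (Fin k) (Fin k) ℝ)
    (P : Matrix (Fin k) (Fin n) ℝ) (gr : Fin n → ℝ) (v : Fin k → ℝ)
    (R1 : Matrix (Fin n) (Fin n) ℝ) (R2 : Matrix (Fin k) (Fin k) ℝ)
    (a b c : Fin k → ℝ) (p : Fin k → ℕ) (F : Fin n → ℝ)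
    (hH : H = 1 - Aᵀ * (A * Aᵀ)⁻¹ * A)
    (hQ : Q = B * H * Bᵀ - Matrix.diagonal gv)
    (hP : P = Q⁻¹ * B * H)
    (hv : v = P *ᵥ gr)
    (hF : F = -(((H - Pᵀ * Q * P) * R1 * (H - Pᵀ * Q * P)) *ᵥ gr)
        - ((Pᵀ * Matrix.diagonal gv *
            (R2 * Matrix.diagonal gv - Matrix.diagonal a)) *ᵥ v)
        - ((Pᵀ * Matrix.diagonal (fun j => b j + c j * (max 0 (v j)) ^ (2 * p j))) *ᵥ
            (fun j => max 0 (v j))))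
    (hgv : ∀ j, gv j ≤ 0)
    (hli : LinearIndependent ℝ
      (Sum.elim (fun i : Fin m => A i) (fun j : {j : Fin k // gv j = 0} => B (j : Fin k))))
    (hR1 : R1.PosDef) (hR2 : R2.PosSemidef)
    (ha0 : ∀ j, 0 ≤ a j) (hb0 : ∀ j, 0 ≤ b j) (hc0 : ∀ j, 0 ≤ c j)
    (hbc : ∀ j, 0 < b j + c j)
    (hpd : R2.PosDef ∨ (Matrix.diagonal a).PosDef) :
    (F = 0 ↔ ∃ (lam : Fin m → ℝ) (mu : Fin k → ℝ), (∀ j, 0 ≤ mu j) ∧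
      gr + (∑ i, lam i • A i) + (∑ j, mu j • B j) = 0 ∧ (∑ j, mu j * gv j) = 0) := by
  classical
  set D : Matrix (Fin k) (Fin k) ℝ := Matrix.diagonal gv with hD
  have hDsymm : Dᵀ = D := by rw [hD, Matrix.diagonal_transpose]
  -- A has linearly independent rows
  have hAli : LinearIndependent ℝ (fun i => A i) := hli.comp Sum.inl Sum.inl_injective
  have hAAT : (A * Aᵀ).PosDef := gram_posDef A hAli
  have hAdet : IsUnit (A * Aᵀ).det := hAAT.det_pos.ne'.isUnit
  -- H identities
  have hGsymm : ((A * Aᵀ)⁻¹)ᵀ = (A * Aᵀ)⁻¹ := by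
    rw [Matrix.transpose_nonsing_inv, Matrix.transpose_mul, Matrix.transpose_transpose]
  have hHsymm : Hᵀ = H := by
    rw [hH, Matrix.transpose_sub, Matrix.transpose_one, Matrix.transpose_mul,
      Matrix.transpose_mul, Matrix.transpose_transpose, hGsymm, Matrix.mul_assoc]
  have hAH : A * H = 0 := by
    rw [hH, Matrix.mul_sub, Matrix.mul_one, ← Matrix.mul_assoc, ← Matrix.mul_assoc,
      Matrix.mul_nonsing_inv _ hAdet, Matrix.one_mul, sub_self]
  have hHA : H * Aᵀ = 0 := by
    have := congrArg Matrix.transpose hAH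
    rwa [Matrix.transpose_mul, hHsymm, Matrix.transpose_zero] at this
  have hker : ∀ y : Fin n → ℝ, H *ᵥ y = 0 → y = Aᵀ *ᵥ (((A * Aᵀ)⁻¹ * A) *ᵥ y) := by
    intro y hy
    rw [hH, Matrix.sub_mulVec, Matrix.one_mulVec, sub_eq_zero] at hy
    rw [Matrix.mulVec_mulVec, ← Matrix.mul_assoc]
    exact hy
  -- Q identities
  have hBHB : B * H * Bᵀ = Q + D := by rw [hQ]; rw [sub_add_cancel]
  have hQsymm : Qᵀ = Q := by
    rw [hQ, Matrix.transpose_sub, Matrix.transpose_mul, Matrix.transpose_mul,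
      Matrix.transpose_transpose, hHsymm, Matrix.diagonal_transpose, Matrix.mul_assoc]
  have hHH : H * H = H := by
    nth_rewrite 1 [hH]
    rw [Matrix.sub_mul, Matrix.one_mul, Matrix.mul_assoc, Matrix.mul_assoc, hAH,
      Matrix.mul_zero, Matrix.mul_zero, sub_zero]
  have hBHfac : B * H * Bᵀ = (B * H) * (B * H)ᵀ := by
    rw [Matrix.transpose_mul, hHsymm, ← Matrix.mul_assoc, Matrix.mul_assoc B H H, hHH]
  have hQquad : ∀ z : Fin k → ℝ,
      z ⬝ᵥ (Q *ᵥ z) = ((B * H)ᵀ *ᵥ z) ⬝ᵥ ((B * H)ᵀ *ᵥ z) + ∑ j, (-(gv j)) * (z j * z j) := by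
    intro z
    have h1 : Q *ᵥ z = ((B * H) * (B * H)ᵀ) *ᵥ z - D *ᵥ z := by
      rw [hQ, ← hBHfac.symm, Matrix.sub_mulVec]
    have h2 : z ⬝ᵥ (D *ᵥ z) = ∑ j, gv j * (z j * z j) := by
      rw [dotProduct]
      apply Finset.sum_congr rfl
      intro j _
      rw [hD, Matrix.mulVec_diagonal]; ring
    rw [h1, dotProduct_sub, gram_quad, h2]
    simp only [neg_mul, Finset.sum_neg_distrib, sub_eq_add_neg]
  -- Q is positive definite
  have hQpd : Q.PosDef := by
    refine posDef_iff_dotProduct_mulVec.mpr ⟨?_, ?_⟩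
    · rw [Matrix.IsHermitian, Matrix.conjTranspose_eq_transpose_of_trivial, hQsymm]
    · intro z hz
      rw [star_trivial, hQquad z]
      have h1 : 0 ≤ ((B * H)ᵀ *ᵥ z) ⬝ᵥ ((B * H)ᵀ *ᵥ z) :=
        Finset.sum_nonneg fun i _ => mul_self_nonneg _
      have h2 : ∀ j, 0 ≤ (-(gv j)) * (z j * z j) := fun j =>
        mul_nonneg (neg_nonneg.2 (hgv j)) (mul_self_nonneg _)
      have h3 : 0 ≤ ∑ j, (-(gv j)) * (z j * z j) := Finset.sum_nonneg fun j _ => h2 j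
      rcases (add_nonneg h1 h3).lt_or_eq with hlt | heq
      · exact hlt
      exfalso
      have e1 : ((B * H)ᵀ *ᵥ z) ⬝ᵥ ((B * H)ᵀ *ᵥ z) = 0 := by linarith
      have e3 : ∑ j, (-(gv j)) * (z j * z j) = 0 := by linarith
      have hw0 : (B * H)ᵀ *ᵥ z = 0 := dotProduct_self_eq_zero.1 e1
      have hzj : ∀ j, gv j ≠ 0 → z j = 0 := by
        intro j hj
        have ht := (Finset.sum_eq_zero_iff_of_nonneg (fun j _ => h2 j)).1 e3 j
          (Finset.mem_univ j)
        have hgvj : 0 < -(gv j) := lt_of_le_of_ne (neg_nonneg.2 (hgv j))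
          (fun hc => hj (by linarith))
        have hzz : z j * z j = 0 := by
          rcases mul_eq_zero.1 ht with hc | hc
          · exact absurd hc (by linarith)
          · exact hc
        exact mul_self_eq_zero.1 hzz
      have hw0' : H *ᵥ (Bᵀ *ᵥ z) = 0 := by
        rw [Matrix.transpose_mul, hHsymm] at hw0
        rw [Matrix.mulVec_mulVec]
        exact hw0
      have hrep := hker _ hw0'
      set wv := ((A * Aᵀ)⁻¹ * A) *ᵥ (Bᵀ *ᵥ z) with hwv
      have hsum : ∑ s : Fin m ⊕ {j : Fin k // gv j = 0},
          (Sum.elim (fun i => -(wv i)) (fun j => z (j : Fin k))) s •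
          (Sum.elim (fun i : Fin m => A i)
            (fun j : {j : Fin k // gv j = 0} => B (j : Fin k))) s = 0 := by
        have hfun : ∀ s : Fin m ⊕ {j : Fin k // gv j = 0},
            (Sum.elim (fun i => -(wv i)) (fun j => z (j : Fin k))) s •
            (Sum.elim (fun i : Fin m => A i)
              (fun j : {j : Fin k // gv j = 0} => B (j : Fin k))) s
            = (Sum.elim (fun i : Fin m => (-(wv i)) • A i)
                (fun j : {j : Fin k // gv j = 0} => z (j : Fin k) • B (j : Fin k))) s := by
          intro s; cases s <;> rfl
        rw [Finset.sum_congr rfl (fun s _ => hfun s), Fintype.sum_sumElim]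
        have hs1 : ∑ i, (-(wv i)) • A i = -(Aᵀ *ᵥ wv) := by
          rw [tmv]
          simp [neg_smul, Finset.sum_neg_distrib]
        have hs2 : ∑ j : {j : Fin k // gv j = 0}, z (j : Fin k) • B (j : Fin k)
            = ∑ j : Fin k, z j • B j := by
          rw [← Finset.sum_subtype (Finset.univ.filter (fun j => gv j = 0))
            (by simp) (fun j => z j • B j)]
          apply Finset.sum_filter_of_ne
          intro j _ hne
          by_contra hja
          exact hne (by rw [hzj j hja, zero_smul])
        rw [hs1, hs2, ← tmv, ← hrep]
        exact neg_add_cancel _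
      have hco := Fintype.linearIndependent_iff.1 hli _ hsum
      apply hz
      funext j
      by_cases hja : gv j = 0
      · exact hco (Sum.inr ⟨j, hja⟩)
      · exact hzj j hja
  have hQdet : IsUnit Q.det := hQpd.det_pos.ne'.isUnit
  have hQiQ : Q⁻¹ * Q = 1 := Matrix.nonsing_inv_mul Q hQdet
  have hQQi : Q * Q⁻¹ = 1 := Matrix.mul_nonsing_inv Q hQdet
  have hQisymm : (Q⁻¹)ᵀ = Q⁻¹ := by rw [Matrix.transpose_nonsing_inv, hQsymm]
  have hPT : Pᵀ = H * Bᵀ * Q⁻¹ := by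
    rw [hP, Matrix.transpose_mul, Matrix.transpose_mul, hHsymm, hQisymm,
      ← Matrix.mul_assoc]
  have hPTQ : Pᵀ * Q = H * Bᵀ := by
    rw [hPT, Matrix.mul_assoc, hQiQ, Matrix.mul_one]
  have hPA : P * Aᵀ = 0 := by
    rw [hP, Matrix.mul_assoc, hHA, Matrix.mul_zero]
  have hPBT : P * Bᵀ = 1 + Q⁻¹ * D := by
    rw [hP, Matrix.mul_assoc Q⁻¹ B H, Matrix.mul_assoc Q⁻¹ (B * H) Bᵀ, hBHB,
      Matrix.mul_add, hQiQ]
  set M := H - Pᵀ * Q * P with hM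
  have hMsymm : Mᵀ = M := by
    rw [hM, Matrix.transpose_sub, hHsymm, Matrix.transpose_mul, Matrix.transpose_mul,
      Matrix.transpose_transpose, hQsymm, Matrix.mul_assoc]
  have hMA : M * Aᵀ = 0 := by
    rw [hM, Matrix.sub_mul, hHA, Matrix.mul_assoc, hPA, Matrix.mul_zero, sub_zero]
  have hMBT : M * Bᵀ = -(Pᵀ * D) := by
    have h1 : Pᵀ * Q * P * Bᵀ = H * Bᵀ + Pᵀ * D := by
      rw [Matrix.mul_assoc (Pᵀ * Q) P Bᵀ, hPBT, Matrix.mul_add, Matrix.mul_one, hPTQ,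
        ← Matrix.mul_assoc (H * Bᵀ) Q⁻¹ D, ← hPT]
    rw [hM, Matrix.sub_mul, h1]
    abel
  have hMgr : M *ᵥ gr = H *ᵥ (gr - Bᵀ *ᵥ v) := by
    rw [hM, Matrix.sub_mulVec, Matrix.mulVec_sub]
    congr 1
    rw [hv]
    simp only [Matrix.mulVec_mulVec]
    rw [← Matrix.mul_assoc, hPTQ]
  constructor
  · -- F = 0 → KKT
    intro hF0
    -- the four nonnegative quantities
    set u := M *ᵥ gr with hu
    set t1 : ℝ := u ⬝ᵥ (R1 *ᵥ u) with ht1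
    set t2 : ℝ := (D *ᵥ v) ⬝ᵥ (R2 *ᵥ (D *ᵥ v)) with ht2
    set t3 : ℝ := ∑ j, (-(gv j)) * (a j * (v j * v j)) with ht3
    set t4 : ℝ := ∑ j, (b j + c j * (max 0 (v j)) ^ (2 * p j)) *
      (max 0 (v j) * max 0 (v j)) with ht4
    -- dot products of gr with the three pieces of F
    have e1 : gr ⬝ᵥ ((M * R1 * M) *ᵥ gr) = t1 := by
      rw [← Matrix.mulVec_mulVec, ← Matrix.mulVec_mulVec, dot_symm M hMsymm]
    have e2 : gr ⬝ᵥ ((Pᵀ * D * (R2 * D - Matrix.diagonal a)) *ᵥ v) = t2 + t3 := by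
      rw [← Matrix.mulVec_mulVec, ← Matrix.mulVec_mulVec, dot_tmv, ← hv,
        dot_symm D hDsymm, Matrix.sub_mulVec, ← Matrix.mulVec_mulVec, dotProduct_sub]
      have h2 : (D *ᵥ v) ⬝ᵥ (Matrix.diagonal a *ᵥ v) = -t3 := by
        rw [ht3, dotProduct, ← Finset.sum_neg_distrib]
        apply Finset.sum_congr rfl
        intro j _
        rw [hD, Matrix.mulVec_diagonal, Matrix.mulVec_diagonal]
        ring
      rw [h2, ht2]
      ring
    have e3 : gr ⬝ᵥ ((Pᵀ * Matrix.diagonal (fun j => b j + c j * (max 0 (v j)) ^ (2 * p j)))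
        *ᵥ (fun j => max 0 (v j))) = t4 := by
      rw [← Matrix.mulVec_mulVec, dot_tmv, ← hv, ht4, dotProduct]
      apply Finset.sum_congr rfl
      intro j _
      rw [Matrix.mulVec_diagonal]
      calc v j * ((b j + c j * (max 0 (v j)) ^ (2 * p j)) * max 0 (v j))
          = (b j + c j * (max 0 (v j)) ^ (2 * p j)) * (v j * max 0 (v j)) := by ring
        _ = _ := by rw [mul_max_self]
    have hzero : t1 + (t2 + t3) + t4 = 0 := by
      have hd : gr ⬝ᵥ F = 0 := by rw [hF0, dotProduct_zero]
      rw [hF, dotProduct_sub, dotProduct_sub, dotProduct_neg, e1, e2, e3] at hd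
      linarith
    -- each is nonnegative
    have hn1 : 0 ≤ t1 := by
      have := hR1.posSemidef.dotProduct_mulVec_nonneg u
      rwa [star_trivial] at this
    have hn2 : 0 ≤ t2 := by
      have := hR2.dotProduct_mulVec_nonneg (D *ᵥ v)
      rwa [star_trivial] at this
    have hn3 : 0 ≤ t3 := Finset.sum_nonneg fun j _ =>
      mul_nonneg (neg_nonneg.2 (hgv j)) (mul_nonneg (ha0 j) (mul_self_nonneg _))
    have hn4 : 0 ≤ t4 := Finset.sum_nonneg fun j _ =>
      mul_nonneg (add_nonneg (hb0 j) (mul_nonneg (hc0 j) (pow_nonneg (le_max_left 0 _) _)))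
        (mul_self_nonneg _)
    have hz1 : t1 = 0 := by linarith
    have hz2 : t2 = 0 := by linarith
    have hz3 : t3 = 0 := by linarith
    have hz4 : t4 = 0 := by linarith
    rw [ht3] at hz3
    rw [ht4] at hz4
    -- u = 0
    have hu0 : u = 0 := by
      by_contra hne
      have := hR1.dotProduct_mulVec_pos (x := u) hne
      rw [star_trivial] at this
      rw [ht1] at hz1
      linarith
    -- max 0 (v j) = 0 for all j
    have hvplus : ∀ j, max 0 (v j) = 0 := by
      intro j
      have hterm := (Finset.sum_eq_zero_iff_of_nonneg (fun j _ =>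
        mul_nonneg (add_nonneg (hb0 j) (mul_nonneg (hc0 j) (pow_nonneg (le_max_left 0 _) _)))
          (mul_self_nonneg (max 0 (v j))))).1 hz4 j (Finset.mem_univ j)
      by_contra hne
      have hpos : 0 < max 0 (v j) := lt_of_le_of_ne (le_max_left 0 _) (Ne.symm hne)
      have hfac : 0 < b j + c j * (max 0 (v j)) ^ (2 * p j) := by
        rcases (hb0 j).lt_or_eq with hb | hb
        · have : 0 ≤ c j * (max 0 (v j)) ^ (2 * p j) :=
            mul_nonneg (hc0 j) (pow_nonneg (le_max_left 0 _) _)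
          linarith
        · have hc : 0 < c j := by have := hbc j; linarith
          have : 0 < c j * (max 0 (v j)) ^ (2 * p j) :=
            mul_pos hc (pow_pos hpos _)
          linarith
      have : 0 < (b j + c j * (max 0 (v j)) ^ (2 * p j)) * (max 0 (v j) * max 0 (v j)) :=
        mul_pos hfac (mul_pos hpos hpos)
      linarith
    have hvle : ∀ j, v j ≤ 0 := by
      intro j
      have := le_max_right 0 (v j)
      rw [hvplus j] at this
      exact this
    -- gv j * v j = 0 for all j
    have hgvv : ∀ j, gv j * v j = 0 := by
      rcases hpd with hR2pd | hapd
      · have hDv : D *ᵥ v = 0 := by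
          by_contra hne
          have := hR2pd.dotProduct_mulVec_pos (x := D *ᵥ v) hne
          rw [star_trivial] at this
          rw [ht2] at hz2
          linarith
        intro j
        have := congrFun hDv j
        rwa [hD, Matrix.mulVec_diagonal] at this
      · intro j
        have haj : 0 < a j := Matrix.posDef_diagonal_iff.1 hapd j
        have hterm := (Finset.sum_eq_zero_iff_of_nonneg (fun j _ =>
          mul_nonneg (neg_nonneg.2 (hgv j)) (mul_nonneg (ha0 j) (mul_self_nonneg _)))).1
          hz3 j (Finset.mem_univ j)
        by_cases hgj : gv j = 0
        · rw [hgj, zero_mul]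
        · have hgneg : 0 < -(gv j) := lt_of_le_of_ne (neg_nonneg.2 (hgv j))
            (fun hc => hgj (by linarith))
          have hv2 : a j * (v j * v j) = 0 := by
            rcases mul_eq_zero.1 hterm with hc | hc
            · exact absurd hc (by linarith)
            · exact hc
          have : v j * v j = 0 := by
            rcases mul_eq_zero.1 hv2 with hc | hc
            · exact absurd hc (by linarith)
            · exact hc
          rw [mul_self_eq_zero.1 this, mul_zero]
    -- build KKT multipliers
    have hy0 : H *ᵥ (gr - Bᵀ *ᵥ v) = 0 := by rw [← hMgr, hu0]
    have hrep := hker _ hy0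
    set wv := ((A * Aᵀ)⁻¹ * A) *ᵥ (gr - Bᵀ *ᵥ v) with hwv
    refine ⟨fun i => -(wv i), fun j => -(v j), fun j => neg_nonneg.2 (hvle j), ?_, ?_⟩
    · have h1 : ∑ i, (-(wv i)) • A i = -(Aᵀ *ᵥ wv) := by
        rw [tmv]
        simp [neg_smul, Finset.sum_neg_distrib]
      have h2 : ∑ j, (-(v j)) • B j = -(Bᵀ *ᵥ v) := by
        rw [tmv]
        simp [neg_smul, Finset.sum_neg_distrib]
      rw [h1, h2, ← hrep]
      abel
    · apply Finset.sum_eq_zero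
      intro j _
      linear_combination -(hgvv j)
  · -- KKT → F = 0
    rintro ⟨lam, mu, hmu0, hkkt, hcomp⟩
    have hkkt' : gr + Aᵀ *ᵥ lam + Bᵀ *ᵥ mu = 0 := by
      rw [tmv A lam, tmv B mu]
      exact hkkt
    have hgr : gr = -(Aᵀ *ᵥ lam) - Bᵀ *ᵥ mu := by
      funext j
      have := congrFun hkkt' j
      simp only [Pi.add_apply, Pi.zero_apply, Pi.sub_apply, Pi.neg_apply] at this ⊢
      linarith
    have hmugv : ∀ j, mu j * gv j = 0 := by
      have hterm : ∀ j ∈ Finset.univ, (0:ℝ) ≤ -(mu j * gv j) := by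
        intro j _
        have := mul_nonneg (hmu0 j) (neg_nonneg.2 (hgv j))
        nlinarith
      have hsum0 : ∑ j, -(mu j * gv j) = 0 := by
        rw [Finset.sum_neg_distrib, hcomp, neg_zero]
      intro j
      have := (Finset.sum_eq_zero_iff_of_nonneg hterm).1 hsum0 j (Finset.mem_univ j)
      linarith
    have hDmu : D *ᵥ mu = 0 := by
      funext j
      rw [hD, Matrix.mulVec_diagonal, Pi.zero_apply, mul_comm]
      exact hmugv j
    have hMgr0 : M *ᵥ gr = 0 := by
      rw [hgr, Matrix.mulVec_sub, Matrix.mulVec_neg, Matrix.mulVec_mulVec,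
        Matrix.mulVec_mulVec, hMA, hMBT, Matrix.zero_mulVec, neg_zero,
        Matrix.neg_mulVec, ← Matrix.mulVec_mulVec, hDmu, Matrix.mulVec_zero]
      simp
    have hvmu : v = -mu := by
      rw [hv, hgr, Matrix.mulVec_sub, Matrix.mulVec_neg, Matrix.mulVec_mulVec,
        Matrix.mulVec_mulVec, hPA, hPBT, Matrix.zero_mulVec, neg_zero,
        Matrix.add_mulVec, Matrix.one_mulVec, ← Matrix.mulVec_mulVec, hDmu,
        Matrix.mulVec_zero, add_zero]
      simp
    have hT1 : (M * R1 * M) *ᵥ gr = 0 := by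
      rw [← Matrix.mulVec_mulVec, hMgr0, Matrix.mulVec_zero]
    have hDv : D *ᵥ v = 0 := by rw [hvmu, Matrix.mulVec_neg, hDmu, neg_zero]
    have hT2 : (Pᵀ * D * (R2 * D - Matrix.diagonal a)) *ᵥ v = 0 := by
      rw [← Matrix.mulVec_mulVec, ← Matrix.mulVec_mulVec]
      suffices hzz : D *ᵥ ((R2 * D - Matrix.diagonal a) *ᵥ v) = 0 by
        rw [hzz, Matrix.mulVec_zero]
      rw [Matrix.sub_mulVec, ← Matrix.mulVec_mulVec, hDv, Matrix.mulVec_zero, zero_sub,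
        Matrix.mulVec_neg, neg_eq_zero]
      funext j
      rw [hD, Matrix.mulVec_diagonal, Matrix.mulVec_diagonal, Pi.zero_apply, hvmu]
      simp only [Pi.neg_apply]
      linear_combination -(a j) * hmugv j
    have hT3 : (fun j => max 0 (v j)) = (0 : Fin k → ℝ) := by
      funext j
      rw [hvmu, Pi.zero_apply, Pi.neg_apply, max_eq_left (neg_nonpos.2 (hmu0 j))]
    rw [hF, hT1, hT2, hT3, Matrix.mulVec_zero]
    simp


/-- Theorem 2.3(c): for `x ∈ S`, `F(x) = 0` iff `x ∈ Φ`. -/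
theorem stmt_11
    {n m k : ℕ} (hmn : m < n)
    (θ : (Fin n → ℝ) → ℝ) (h : Fin m → (Fin n → ℝ) → ℝ) (g : Fin k → (Fin n → ℝ) → ℝ)
    (hθ : ContDiff ℝ 2 θ) (hhC : ∀ i, ContDiff ℝ 2 (h i)) (hgC : ∀ j, ContDiff ℝ 2 (g j))
    (hH1 : hypH1 θ h g) (hH2 : hypH2 h g)
    (R1 : (Fin n → ℝ) → Matrix (Fin n) (Fin n) ℝ)
    (R2 : (Fin n → ℝ) → Matrix (Fin k) (Fin k) ℝ)
    (a b c : Fin k → (Fin n → ℝ) → ℝ) (p : Fin k → ℕ)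
    (hR1C : ∀ i j, ContDiff ℝ 1 fun x => R1 x i j)
    (hR1pd : ∀ x, (R1 x).PosDef)
    (hR2C : ∀ i j, ContDiff ℝ 1 fun x => R2 x i j)
    (hR2psd : ∀ x, (R2 x).PosSemidef)
    (haC : ∀ j, ContDiff ℝ 1 (a j)) (hbC : ∀ j, ContDiff ℝ 1 (b j))
    (hcC : ∀ j, ContDiff ℝ 1 (c j))
    (ha0 : ∀ j x, 0 ≤ a j x) (hb0 : ∀ j x, 0 ≤ b j x) (hc0 : ∀ j x, 0 ≤ c j x)
    (hbc : ∀ x ∈ feas h g, ∀ j, 0 < b j x + c j x)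
    (hpd : ∀ x ∈ feas h g, (R2 x).PosDef ∨ (Matrix.diagonal fun j => a j x).PosDef)
    (hp : ∀ j, 1 ≤ p j) :
    ∀ x ∈ feas h g, (vecF θ h g R1 R2 a b c p x = 0 ↔ x ∈ KKTset θ h g) := by
  intro x hx
  obtain ⟨hxh, hxg⟩ := id hx
  have hcore := core (matA h x) (matB g x) (fun j => g j x) (matH h x) (matQ h g x)
    (matP h g x) (grad θ x) (vecv θ h g x) (R1 x) (R2 x)
    (fun j => a j x) (fun j => b j x) (fun j => c j x) p
    (vecF θ h g R1 R2 a b c p x)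
    rfl rfl rfl rfl rfl hxg (hH2 x hx) (hR1pd x) (hR2psd x)
    (fun j => ha0 j x) (fun j => hb0 j x) (fun j => hc0 j x)
    (fun j => hbc x hx j) (hpd x hx)
  rw [hcore]
  constructor
  · rintro ⟨lam, mu, h1, h2, h3⟩
    exact ⟨⟨hxh, hxg⟩, lam, mu, h1, h2, h3⟩
  · rintro ⟨_, lam, mu, h1, h2, h3⟩
    exact ⟨lam, mu, h1, h2, h3⟩

end
end

section
/- Multiplier identity at KKT points: Under assumptions (H1) and (H2), suppose x ∈ S and λ ∈ ℝ^m, μ ∈ ℝ^k with μ ≥ 0 satisfy (∇θ(x))ᵀ + A(x)ᵀλ + B(x)ᵀμ = 0 and μᵀg(x) = 0. Then diag(g(x))μ = 0, v(x) = −μ, and consequently (v(x))⁺ = 0. -/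
open Matrix Set Filter

noncomputable section

section AuxLemmas

variable {m n k : ℕ}

private lemma vecMul_eq_sum_smul (A : Matrix (Fin m) (Fin n) ℝ) (y : Fin m → ℝ) :
    y ᵥ* A = ∑ i, y i • A i := by
  funext l
  simp [Matrix.vecMul, dotProduct, Finset.sum_apply]

private lemma gram_posdef (A : Matrix (Fin m) (Fin n) ℝ)
    (hA : LinearIndependent ℝ (fun i => A i)) : (A * Aᵀ).PosDef := by
  rw [Matrix.posDef_iff_dotProduct_mulVec]
  constructor
  · rw [Matrix.IsHermitian, Matrix.conjTranspose_eq_transpose_of_trivial,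
      Matrix.transpose_mul, Matrix.transpose_transpose]
  · intro y hy
    have hw : y ᵥ* A ≠ 0 := by
      intro h0
      apply hy
      have h1 : ∑ i, y i • A i = 0 := by rw [← vecMul_eq_sum_smul, h0]
      have h2 := Fintype.linearIndependent_iff.mp hA y h1
      funext i; exact h2 i
    have key : dotProduct (star y) ((A * Aᵀ) *ᵥ y) = (y ᵥ* A) ⬝ᵥ (y ᵥ* A) := by
      rw [star_trivial, ← Matrix.mulVec_mulVec, Matrix.dotProduct_mulVec,
        Matrix.mulVec_transpose]
    rw [key]
    refine lt_of_le_of_ne (Finset.sum_nonneg fun i _ => mul_self_nonneg _) ?_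
    exact fun hz => hw (dotProduct_self_eq_zero.mp hz.symm)

private lemma H_mul_At (A : Matrix (Fin m) (Fin n) ℝ) (hdet : IsUnit (A * Aᵀ).det) :
    (1 - Aᵀ * (A * Aᵀ)⁻¹ * A) * Aᵀ = 0 := by
  rw [Matrix.sub_mul, Matrix.one_mul, Matrix.mul_assoc (Aᵀ * (A * Aᵀ)⁻¹) A Aᵀ,
    Matrix.mul_assoc Aᵀ (A * Aᵀ)⁻¹ (A * Aᵀ), Matrix.nonsing_inv_mul _ hdet, Matrix.mul_one,
    sub_self]

private lemma inv_gram_transpose (A : Matrix (Fin m) (Fin n) ℝ) :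
    ((A * Aᵀ)⁻¹)ᵀ = (A * Aᵀ)⁻¹ := by
  rw [Matrix.transpose_nonsing_inv, Matrix.transpose_mul, Matrix.transpose_transpose]

private lemma H_symm (A : Matrix (Fin m) (Fin n) ℝ) :
    (1 - Aᵀ * (A * Aᵀ)⁻¹ * A)ᵀ = 1 - Aᵀ * (A * Aᵀ)⁻¹ * A := by
  rw [Matrix.transpose_sub, Matrix.transpose_one, Matrix.transpose_mul, Matrix.transpose_mul,
    Matrix.transpose_transpose, inv_gram_transpose, ← Matrix.mul_assoc]

private lemma H_mul_M (A : Matrix (Fin m) (Fin n) ℝ) (hdet : IsUnit (A * Aᵀ).det) :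
    (1 - Aᵀ * (A * Aᵀ)⁻¹ * A) * (Aᵀ * (A * Aᵀ)⁻¹ * A) = 0 := by
  rw [Matrix.mul_assoc Aᵀ ((A * Aᵀ)⁻¹) A,
    ← Matrix.mul_assoc (1 - Aᵀ * ((A * Aᵀ)⁻¹ * A)) Aᵀ ((A * Aᵀ)⁻¹ * A),
    ← Matrix.mul_assoc Aᵀ ((A * Aᵀ)⁻¹) A, H_mul_At A hdet, Matrix.zero_mul]

private lemma H_idem (A : Matrix (Fin m) (Fin n) ℝ) (hdet : IsUnit (A * Aᵀ).det) :
    (1 - Aᵀ * (A * Aᵀ)⁻¹ * A) * (1 - Aᵀ * (A * Aᵀ)⁻¹ * A) = 1 - Aᵀ * (A * Aᵀ)⁻¹ * A := by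
  rw [Matrix.mul_sub, Matrix.mul_one, H_mul_M A hdet, sub_zero]

private lemma Q_posdef (A : Matrix (Fin m) (Fin n) ℝ) (B : Matrix (Fin k) (Fin n) ℝ)
    (gv : Fin k → ℝ) (hgv : ∀ j, gv j ≤ 0)
    (hli : LinearIndependent ℝ
      (Sum.elim (fun i : Fin m => A i) (fun j : {j : Fin k // gv j = 0} => B (j : Fin k)))) :
    (B * (1 - Aᵀ * (A * Aᵀ)⁻¹ * A) * Bᵀ - Matrix.diagonal gv).PosDef := by
  classical
  have liA : LinearIndependent ℝ (fun i : Fin m => A i) :=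
    hli.comp Sum.inl Sum.inl_injective
  have hdet : IsUnit (A * Aᵀ).det :=
    (Matrix.isUnit_iff_isUnit_det _).mp (gram_posdef A liA).isUnit
  set Hm : Matrix (Fin n) (Fin n) ℝ := 1 - Aᵀ * (A * Aᵀ)⁻¹ * A with hHm
  clear_value Hm
  rw [Matrix.posDef_iff_dotProduct_mulVec]
  constructor
  · rw [Matrix.IsHermitian, Matrix.conjTranspose_eq_transpose_of_trivial,
      Matrix.transpose_sub, Matrix.diagonal_transpose, Matrix.transpose_mul,
      Matrix.transpose_mul, Matrix.transpose_transpose, hHm, H_symm A, ← Matrix.mul_assoc]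
  · intro u hu
    set w : Fin n → ℝ := Bᵀ *ᵥ u with hw
    clear_value w
    have hHmm : Hm * Hm = Hm := by rw [hHm]; exact H_idem A hdet
    have hHt : Hmᵀ = Hm := by rw [hHm]; exact H_symm A
    have hval : dotProduct (star u) ((B * Hm * Bᵀ - Matrix.diagonal gv) *ᵥ u)
        = (Hm *ᵥ w) ⬝ᵥ (Hm *ᵥ w) - ∑ j, gv j * (u j * u j) := by
      rw [star_trivial, Matrix.sub_mulVec, dotProduct_sub]
      congr 1
      · calc u ⬝ᵥ ((B * Hm * Bᵀ) *ᵥ u)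
            = u ⬝ᵥ (B *ᵥ (Hm *ᵥ w)) := by
              rw [hw, Matrix.mulVec_mulVec u Hm Bᵀ, Matrix.mulVec_mulVec u B (Hm * Bᵀ),
                ← Matrix.mul_assoc]
          _ = (u ᵥ* B) ⬝ᵥ (Hm *ᵥ w) := Matrix.dotProduct_mulVec u B (Hm *ᵥ w)
          _ = w ⬝ᵥ (Hm *ᵥ w) := by rw [← Matrix.mulVec_transpose B u, ← hw]
          _ = w ⬝ᵥ (Hm *ᵥ (Hm *ᵥ w)) := by rw [Matrix.mulVec_mulVec w Hm Hm, hHmm]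
          _ = (w ᵥ* Hm) ⬝ᵥ (Hm *ᵥ w) := Matrix.dotProduct_mulVec w Hm (Hm *ᵥ w)
          _ = (Hm *ᵥ w) ⬝ᵥ (Hm *ᵥ w) := by rw [← Matrix.mulVec_transpose Hm w, hHt]
      · simp only [dotProduct, Matrix.mulVec_diagonal]
        exact Finset.sum_congr rfl fun j _ => by ring
    rw [hval]
    have hq : (0:ℝ) ≤ (Hm *ᵥ w) ⬝ᵥ (Hm *ᵥ w) :=
      Finset.sum_nonneg fun i _ => mul_self_nonneg _
    have ht : ∀ j ∈ Finset.univ, gv j * (u j * u j) ≤ 0 := fun j _ =>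
      mul_nonpos_of_nonpos_of_nonneg (hgv j) (mul_self_nonneg _)
    have hts : ∑ j, gv j * (u j * u j) ≤ 0 := Finset.sum_nonpos fun j _ => ht j (Finset.mem_univ j)
    refine lt_of_le_of_ne (by linarith) ?_
    intro hzero
    -- then both pieces vanish
    have hq0 : (Hm *ᵥ w) ⬝ᵥ (Hm *ᵥ w) = 0 := le_antisymm (by linarith) hq
    have hts0 : ∑ j, gv j * (u j * u j) = 0 := by linarith
    have hterm : ∀ j, gv j * (u j * u j) = 0 := fun j =>
      (Finset.sum_eq_zero_iff_of_nonpos ht).mp hts0 j (Finset.mem_univ j)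
    have hinactive : ∀ j, gv j ≠ 0 → u j = 0 := by
      intro j hj
      rcases mul_eq_zero.mp (hterm j) with h1 | h1
      · exact absurd h1 hj
      · exact (mul_self_eq_zero).mp h1
    have hHw : Hm *ᵥ w = 0 := dotProduct_self_eq_zero.mp hq0
    -- w = Aᵀ *ᵥ c
    set c : Fin m → ℝ := ((A * Aᵀ)⁻¹ * A) *ᵥ w with hc
    have hwM : w = Aᵀ *ᵥ c := by
      have hstep : (1 - Aᵀ * (A * Aᵀ)⁻¹ * A) *ᵥ w = 0 := by rw [← hHm]; exact hHw
      rw [Matrix.sub_mulVec, Matrix.one_mulVec, sub_eq_zero] at hstep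
      rw [hc, Matrix.mulVec_mulVec, ← Matrix.mul_assoc]
      exact hstep
    -- build the linear dependence over the sum type
    apply hu
    have hcoef := Fintype.linearIndependent_iff.mp hli
      (Sum.elim (fun i => -c i) (fun j : {j : Fin k // gv j = 0} => u (j : Fin k))) ?_
    · funext j
      by_cases hj : gv j = 0
      · exact hcoef (Sum.inr ⟨j, hj⟩)
      · exact hinactive j hj
    · rw [Fintype.sum_sum_type]
      simp only [Sum.elim_inl, Sum.elim_inr]
      have hfull : ∑ j : {j : Fin k // gv j = 0}, u (j : Fin k) • B (j : Fin k)
          = ∑ j : Fin k, u j • B j := by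
        rw [← Finset.sum_subtype (Finset.univ.filter fun j => gv j = 0)
          (by simp) (fun j => u j • B j)]
        exact Finset.sum_filter_of_ne fun j _ hne => by
          by_contra hgj
          exact hne (by rw [hinactive j hgj, zero_smul])
      rw [hfull]
      funext l
      have h1 := congrFun hwM l
      have h2 : w l = ∑ j : Fin k, u j * B j l := by
        rw [hw]
        simp [Matrix.mulVec, dotProduct, Matrix.transpose_apply, mul_comm]
      have h3 : (Aᵀ *ᵥ c) l = ∑ i : Fin m, c i * A i l := by
        simp [Matrix.mulVec, dotProduct, Matrix.transpose_apply, mul_comm]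
      simp only [Finset.sum_apply, Pi.add_apply, Pi.smul_apply, smul_eq_mul, Pi.zero_apply,
        Pi.neg_apply]
      rw [h2] at h1
      rw [h3] at h1
      have : ∑ i : Fin m, -c i * A i l + ∑ j : Fin k, u j * B j l = 0 := by
        have h4 : ∑ i : Fin m, -c i * A i l = -∑ i : Fin m, c i * A i l := by
          rw [← Finset.sum_neg_distrib]
          exact Finset.sum_congr rfl fun i _ => by ring
        rw [h4, h1]
        ring
      simpa using this

end AuxLemmas



/-- Multiplier identity at KKT points: if `x ∈ S` and `λ, μ` with `μ ≥ 0` satisfy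
`(∇θ(x))ᵀ + A(x)ᵀλ + B(x)ᵀμ = 0` and `μᵀg(x) = 0`, then `diag(g(x))μ = 0`,
`v(x) = −μ` and `(v(x))⁺ = 0`. -/
theorem stmt_12
    {n m k : ℕ} (hmn : m < n)
    (θ : (Fin n → ℝ) → ℝ) (h : Fin m → (Fin n → ℝ) → ℝ) (g : Fin k → (Fin n → ℝ) → ℝ)
    (hθ : ContDiff ℝ 2 θ) (hhC : ∀ i, ContDiff ℝ 2 (h i)) (hgC : ∀ j, ContDiff ℝ 2 (g j))
    (hH1 : hypH1 θ h g) (hH2 : hypH2 h g)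
    (x : Fin n → ℝ) (hx : x ∈ feas h g)
    (lam : Fin m → ℝ) (mu : Fin k → ℝ) (hmu : ∀ j, 0 ≤ mu j)
    (heq : grad θ x + (matA h x)ᵀ.mulVec lam + (matB g x)ᵀ.mulVec mu = 0)
    (hcomp : mu ⬝ᵥ (fun j => g j x) = 0) :
    (Matrix.diagonal fun j => g j x).mulVec mu = 0 ∧
    vecv θ h g x = -mu ∧
    pPart (vecv θ h g x) = 0 := by
  classical
  -- complementary slackness componentwise
  have hμg : ∀ j, g j x * mu j = 0 := by
    have h1 : ∀ j ∈ Finset.univ, mu j * g j x ≤ 0 := fun j _ =>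
      mul_nonpos_of_nonneg_of_nonpos (hmu j) (hx.2 j)
    have hcomp' : ∑ j, mu j * g j x = 0 := hcomp
    have h2 := (Finset.sum_eq_zero_iff_of_nonpos h1).mp hcomp'
    intro j; rw [mul_comm]; exact h2 j (Finset.mem_univ j)
  have c1 : (Matrix.diagonal fun j => g j x) *ᵥ mu = 0 := by
    funext j
    simp [Matrix.mulVec_diagonal, hμg j]
  -- linear independence of the rows of A
  have liA : LinearIndependent ℝ (fun i : Fin m => matA h x i) :=
    (hH2 x hx).comp Sum.inl Sum.inl_injective
  have hGdet : IsUnit (matA h x * (matA h x)ᵀ).det :=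
    (Matrix.isUnit_iff_isUnit_det _).mp (gram_posdef (matA h x) liA).isUnit
  -- Q is positive definite, hence invertible
  have hQpd : (matQ h g x).PosDef := by
    have hli : LinearIndependent ℝ
        (Sum.elim (fun i : Fin m => matA h x i)
          (fun j : {j : Fin k // (fun j => g j x) j = 0} => matB g x (j : Fin k))) :=
      hH2 x hx
    exact Q_posdef (matA h x) (matB g x) (fun j => g j x) (fun j => hx.2 j) hli
  have hQdet : IsUnit (matQ h g x).det :=
    (Matrix.isUnit_iff_isUnit_det _).mp hQpd.isUnit
  have hHA : matH h x * (matA h x)ᵀ = 0 := H_mul_At (matA h x) hGdet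
  -- solve for the gradient
  have hgrad : grad θ x = -((matA h x)ᵀ *ᵥ lam) - ((matB g x)ᵀ *ᵥ mu) := by
    have h0 : grad θ x + ((matA h x)ᵀ *ᵥ lam + (matB g x)ᵀ *ᵥ mu) = 0 := by
      rw [← add_assoc]; exact heq
    have := eq_neg_of_add_eq_zero_left h0
    rw [this, neg_add, sub_eq_add_neg]
  have hBH : (matB g x * matH h x) *ᵥ grad θ x = -(matQ h g x *ᵥ mu) := by
    rw [hgrad, Matrix.mulVec_sub, Matrix.mulVec_neg]
    have e1 : (matB g x * matH h x) *ᵥ ((matA h x)ᵀ *ᵥ lam) = 0 := by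
      rw [Matrix.mulVec_mulVec, Matrix.mul_assoc, hHA, Matrix.mul_zero, Matrix.zero_mulVec]
    have e2 : (matB g x * matH h x) *ᵥ ((matB g x)ᵀ *ᵥ mu)
        = (matB g x * matH h x * (matB g x)ᵀ) *ᵥ mu := by
      rw [Matrix.mulVec_mulVec]
    have e3 : matQ h g x *ᵥ mu = (matB g x * matH h x * (matB g x)ᵀ) *ᵥ mu := by
      unfold matQ
      rw [Matrix.sub_mulVec, c1, sub_zero]
    rw [e1, e2, e3, neg_zero, zero_sub]
  have c2 : vecv θ h g x = -mu := by
    unfold vecv matP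
    rw [Matrix.mul_assoc, ← Matrix.mulVec_mulVec, hBH, Matrix.mulVec_neg, Matrix.mulVec_mulVec,
      Matrix.nonsing_inv_mul _ hQdet, Matrix.one_mulVec]
  refine ⟨c1, c2, ?_⟩
  rw [c2]
  funext j
  simp only [pPart, Pi.neg_apply, Pi.zero_apply]
  exact max_eq_left (neg_nonpos.mpr (hmu j))


end
end
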